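/- arXiv:2206.04552 — 4 statements merged into one kernel-verified Lean document; each statement's English description precedes it below -/
import Mathlib

section
/- Stein–Tikhomirov form of the spectral representation for a Gaussian target (Remark 4): suppose U ≡ 0 (so the target is N_C and Γf(x) = C Df(x) − x f(x), and the Stein kernel simplifies to h_v(x,x') = ∑_{i≥1} λ_i² D₂D₁k(x,x')[e_i,e_i] − ⟨D₁k(x,x'), C x'⟩ − ⟨D₂k(x,x'), C x⟩ + k(x,x')⟨x, x'⟩), and assume ∫ ‖s‖² dμ(s) < ∞ and ∫ ‖x‖² dQ(x) < ∞. Then ∫_X ∫_X h_v(x,x') dQ(x) dQ(x') = ∫_X ‖ Cs · Q̂(s) + DQ̂(s) ‖²_{X_ℂ} dμ(s), where Q̂(s) = ∫ e^{i⟨s,x⟩} dQ(x) and DQ̂(s) = i ∫ x e^{i⟨s,x⟩} dQ(x) ∈ X_ℂ (Bochner integral). -/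
open MeasureTheory ProbabilityTheory Complex Filter
open scoped RealInnerProductSpace
open Metric
set_option linter.unusedSectionVars false
set_option synthInstance.maxHeartbeats 1000000
set_option maxHeartbeats 1000000
set_option linter.unusedTactic false


/-- The vectorised Stein kernel for a centred Gaussian target (potential `U ≡ 0`):
`h_v(x,x') = ∑ᵢ λᵢ² D₂D₁k(x,x')[eᵢ,eᵢ] - ⟪D₁k(x,x'), Cx'⟫ - ⟪D₂k(x,x'), Cx⟫
  + k(x,x')⟪x, x'⟫`. -/
noncomputable def steinKernelHvGauss {X : Type*} [NormedAddCommGroup X]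
    [InnerProductSpace ℝ X] (k : X → X → ℝ) (C : X →L[ℝ] X) (e : ℕ → X) (l : ℕ → ℝ)
    (x x' : X) : ℝ :=
  (∑' i, l i ^ 2 *
      fderiv ℝ (fun y1 => fderiv ℝ (fun x1 => k x1 y1) x (e i)) x' (e i))
  - fderiv ℝ (fun x1 => k x1 x') x (C x')
  - fderiv ℝ (fun y1 => k x y1) x' (C x)
  + k x x' * ⟪x, x'⟫

section Aux
variable {X : Type*} [NormedAddCommGroup X] [InnerProductSpace ℝ X] [CompleteSpace X]
  [MeasurableSpace X] [BorelSpace X] [SecondCountableTopology X]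

lemma absin (t : ℝ) : |Real.sin t| ≤ 1 :=
  abs_le.2 ⟨Real.neg_one_le_sin t, Real.sin_le_one t⟩

lemma abcos (t : ℝ) : |Real.cos t| ≤ 1 :=
  abs_le.2 ⟨Real.neg_one_le_cos t, Real.cos_le_one t⟩

lemma hasFDerivAt_cos_inner (u y x : X) :
    HasFDerivAt (fun x1 => Real.cos ⟪x1 - y, u⟫) ((-Real.sin ⟪x - y, u⟫) • innerSL ℝ u) x := by
  have h0 : HasFDerivAt (fun x1 : X => ⟪x1 - y, u⟫) (innerSL ℝ u) x := by
    have he : (fun x1 : X => ⟪x1 - y, u⟫) = fun x1 => (innerSL ℝ u) (x1 - y) := by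
      funext z; simp [real_inner_comm]
    rw [he]
    simpa [Function.comp_def] using ((innerSL ℝ u).hasFDerivAt (x := x - y)).comp x
      ((hasFDerivAt_id x).sub_const y)
  simpa [Function.comp_def] using (Real.hasDerivAt_cos (⟪x - y, u⟫ : ℝ)).comp_hasFDerivAt x h0

lemma hasFDerivAt_inner_snd (u x y : X) :
    HasFDerivAt (fun y1 : X => ⟪x - y1, u⟫) (-(innerSL ℝ u)) y := by
  have he : (fun y1 : X => ⟪x - y1, u⟫) = fun y1 => (innerSL ℝ u) (x - y1) := by
    funext z; simp [real_inner_comm]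
  rw [he]
  simpa [Function.comp_def] using ((innerSL ℝ u).hasFDerivAt (x := x - y)).comp y
    ((hasFDerivAt_id y).const_sub x)

lemma hasFDerivAt_cos_inner' (u x y : X) :
    HasFDerivAt (fun y1 => Real.cos ⟪x - y1, u⟫) ((Real.sin ⟪x - y, u⟫) • innerSL ℝ u) y := by
  have := (Real.hasDerivAt_cos (⟪x - y, u⟫ : ℝ)).comp_hasFDerivAt y (hasFDerivAt_inner_snd u x y)
  refine this.congr_fderiv ?_
  simp [smul_smul]

lemma hasFDerivAt_msin_inner (u x : X) (c : ℝ) (y : X) :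
    HasFDerivAt (fun y1 => -Real.sin ⟪x - y1, u⟫ * c)
      ((Real.cos ⟪x - y, u⟫ * c) • innerSL ℝ u) y := by
  have h1 := (Real.hasDerivAt_sin (⟪x - y, u⟫ : ℝ)).comp_hasFDerivAt y (hasFDerivAt_inner_snd u x y)
  have h2 := (h1.neg).mul_const c
  refine h2.congr_fderiv ?_
  simp only [smul_neg, neg_neg, smul_smul]
  module

variable {μ : Measure X} [IsFiniteMeasure μ]

lemma cont_inner_right (v : X) : Continuous fun u : X => ⟪v, u⟫ :=
  continuous_const.inner continuous_id

lemma cont_smul_innerSL {c : X → ℝ} (hc : Continuous c) :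
    Continuous fun u : X => c u • innerSL ℝ (E := X) u :=
  hc.smul (innerSL ℝ (E := X)).continuous

lemma norm_smul_innerSL_le (c : ℝ) (u : X) : ‖c • innerSL ℝ (E := X) u‖ ≤ |c| * ‖u‖ := by
  have := norm_smul c (innerSL ℝ (E := X) u)
  rw [this, innerSL_apply_norm]; simp

lemma integrable_trig_smul_innerSL {c : X → ℝ} (hc : Continuous c) (hbd : ∀ u, |c u| ≤ 1)
    (hμ1 : Integrable (fun u : X => ‖u‖) μ) :
    Integrable (fun u : X => c u • innerSL ℝ (E := X) u) μ := by
  refine hμ1.mono' (cont_smul_innerSL hc).aestronglyMeasurable ?_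
  refine Eventually.of_forall fun u => ?_
  calc ‖c u • innerSL ℝ (E := X) u‖ ≤ |c u| * ‖u‖ := norm_smul_innerSL_le _ _
    _ ≤ 1 * ‖u‖ := by gcongr; exact hbd u
    _ = ‖u‖ := one_mul _

lemma hasFDerivAt_int_cos (hμ1 : Integrable (fun u : X => ‖u‖) μ) (y x : X) :
    HasFDerivAt (fun x1 => ∫ u, Real.cos ⟪x1 - y, u⟫ ∂μ)
      (∫ u, (-Real.sin ⟪x - y, u⟫) • innerSL ℝ u ∂μ) x := by
  apply hasFDerivAt_integral_of_dominated_of_fderiv_le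
    (F := fun x1 u => Real.cos ⟪x1 - y, u⟫)
    (F' := fun x1 u => (-Real.sin ⟪x1 - y, u⟫) • innerSL ℝ u)
    (bound := fun u : X => ‖u‖) (Metric.ball_mem_nhds _ one_pos)
  · exact Eventually.of_forall fun x1 =>
      (Real.continuous_cos.comp (cont_inner_right _)).aestronglyMeasurable
  · exact (integrable_const 1).mono'
      (Real.continuous_cos.comp (cont_inner_right _)).aestronglyMeasurable
      (Eventually.of_forall fun u => by simpa using abcos _)
  · exact (cont_smul_innerSL ((Real.continuous_sin.comp (cont_inner_right _)).neg)).aestronglyMeasurable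
  · refine Eventually.of_forall fun u x1 _ => ?_
    calc ‖(-Real.sin ⟪x1 - y, u⟫) • innerSL ℝ (E := X) u‖ ≤ |(-Real.sin ⟪x1 - y, u⟫)| * ‖u‖ :=
        norm_smul_innerSL_le _ _
      _ ≤ 1 * ‖u‖ := by gcongr; simpa using absin _
      _ = ‖u‖ := one_mul _
  · exact hμ1
  · exact Eventually.of_forall fun u x1 _ => hasFDerivAt_cos_inner u y x1

lemma hasFDerivAt_int_cos' (hμ1 : Integrable (fun u : X => ‖u‖) μ) (x y : X) :
    HasFDerivAt (fun y1 => ∫ u, Real.cos ⟪x - y1, u⟫ ∂μ)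
      (∫ u, (Real.sin ⟪x - y, u⟫) • innerSL ℝ u ∂μ) y := by
  apply hasFDerivAt_integral_of_dominated_of_fderiv_le
    (F := fun y1 u => Real.cos ⟪x - y1, u⟫)
    (F' := fun y1 u => (Real.sin ⟪x - y1, u⟫) • innerSL ℝ u)
    (bound := fun u : X => ‖u‖) (Metric.ball_mem_nhds _ one_pos)
  · exact Eventually.of_forall fun y1 =>
      (Real.continuous_cos.comp (cont_inner_right _)).aestronglyMeasurable
  · exact (integrable_const 1).mono'
      (Real.continuous_cos.comp (cont_inner_right _)).aestronglyMeasurable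
      (Eventually.of_forall fun u => by simpa using abcos _)
  · exact (cont_smul_innerSL (Real.continuous_sin.comp (cont_inner_right _))).aestronglyMeasurable
  · refine Eventually.of_forall fun u y1 _ => ?_
    calc ‖(Real.sin ⟪x - y1, u⟫) • innerSL ℝ (E := X) u‖ ≤ |Real.sin ⟪x - y1, u⟫| * ‖u‖ :=
        norm_smul_innerSL_le _ _
      _ ≤ 1 * ‖u‖ := by gcongr; simpa using absin _
      _ = ‖u‖ := one_mul _
  · exact hμ1
  · exact Eventually.of_forall fun u y1 _ => hasFDerivAt_cos_inner' u x y1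

lemma hasFDerivAt_int_msin (hμ2 : Integrable (fun u : X => ‖u‖ ^ 2) μ) (x w y : X) :
    HasFDerivAt (fun y1 => ∫ u, -Real.sin ⟪x - y1, u⟫ * ⟪u, w⟫ ∂μ)
      (∫ u, (Real.cos ⟪x - y, u⟫ * ⟪u, w⟫) • innerSL ℝ u ∂μ) y := by
  apply hasFDerivAt_integral_of_dominated_of_fderiv_le
    (F := fun y1 u => -Real.sin ⟪x - y1, u⟫ * ⟪u, w⟫)
    (F' := fun y1 u => (Real.cos ⟪x - y1, u⟫ * ⟪u, w⟫) • innerSL ℝ u)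
    (bound := fun u : X => ‖u‖ ^ 2 * ‖w‖) (Metric.ball_mem_nhds _ one_pos)
  · refine Eventually.of_forall fun y1 => Continuous.aestronglyMeasurable ?_
    exact ((Real.continuous_sin.comp (cont_inner_right _)).neg).mul (continuous_id.inner continuous_const)
  · refine (((integrable_const (1:ℝ)).add hμ2).mul_const ‖w‖).mono' ?_ (Eventually.of_forall fun u => ?_)
    · exact (((Real.continuous_sin.comp (cont_inner_right _)).neg).mul
        (continuous_id.inner continuous_const)).aestronglyMeasurable
    · calc ‖-Real.sin ⟪x - y, u⟫ * ⟪u, w⟫‖ = |Real.sin ⟪x - y, u⟫| * |⟪u, w⟫| := by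
            rw [norm_mul]; simp
        _ ≤ 1 * (‖u‖ * ‖w‖) := mul_le_mul (absin _) (by simpa using abs_real_inner_le_norm u w) (abs_nonneg _) zero_le_one
        _ ≤ 1 * ((1 + ‖u‖ ^ 2) * ‖w‖) := by
            have : ‖u‖ ≤ 1 + ‖u‖ ^ 2 := by nlinarith [sq_nonneg (‖u‖ - 1)]
            have h2 : ‖u‖ * ‖w‖ ≤ (1 + ‖u‖ ^ 2) * ‖w‖ := by
              apply mul_le_mul_of_nonneg_right this (norm_nonneg _)
            linarith
        _ = (1 + ‖u‖ ^ 2) * ‖w‖ := one_mul _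
  · refine Continuous.aestronglyMeasurable ?_
    exact cont_smul_innerSL ((Real.continuous_cos.comp (cont_inner_right _)).mul
      (continuous_id.inner continuous_const))
  · refine Eventually.of_forall fun u y1 _ => ?_
    calc ‖(Real.cos ⟪x - y1, u⟫ * ⟪u, w⟫) • innerSL ℝ (E := X) u‖
        ≤ |Real.cos ⟪x - y1, u⟫ * ⟪u, w⟫| * ‖u‖ := norm_smul_innerSL_le _ _
      _ ≤ (1 * (‖u‖ * ‖w‖)) * ‖u‖ := by
          gcongr
          rw [abs_mul]
          exact mul_le_mul (abcos _) (by simpa using abs_real_inner_le_norm u w)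
            (abs_nonneg _) zero_le_one
      _ = ‖u‖ ^ 2 * ‖w‖ := by ring
  · exact hμ2.mul_const _
  · exact Eventually.of_forall fun u y1 _ => hasFDerivAt_msin_inner u x ⟪u, w⟫ y1

lemma integrable_cosmul_innerSL (hμ2 : Integrable (fun u : X => ‖u‖ ^ 2) μ) (x y w : X) :
    Integrable (fun u : X => (Real.cos ⟪x - y, u⟫ * ⟪u, w⟫) • innerSL ℝ (E := X) u) μ := by
  refine (hμ2.mul_const ‖w‖).mono' ?_ (Eventually.of_forall fun u => ?_)
  · exact (cont_smul_innerSL ((Real.continuous_cos.comp (cont_inner_right _)).mul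
      (continuous_id.inner continuous_const))).aestronglyMeasurable
  · calc ‖(Real.cos ⟪x - y, u⟫ * ⟪u, w⟫) • innerSL ℝ (E := X) u‖
        ≤ |Real.cos ⟪x - y, u⟫ * ⟪u, w⟫| * ‖u‖ := norm_smul_innerSL_le _ _
      _ ≤ (1 * (‖u‖ * ‖w‖)) * ‖u‖ := by
          gcongr
          rw [abs_mul]
          exact mul_le_mul (abcos _) (by simpa using abs_real_inner_le_norm u w)
            (abs_nonneg _) zero_le_one
      _ = ‖u‖ ^ 2 * ‖w‖ := by ring

lemma fderiv_int_cos_apply (hμ1 : Integrable (fun u : X => ‖u‖) μ) (y x v : X) :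
    fderiv ℝ (fun x1 => ∫ u, Real.cos ⟪x1 - y, u⟫ ∂μ) x v
      = ∫ u, -Real.sin ⟪x - y, u⟫ * ⟪u, v⟫ ∂μ := by
  rw [(hasFDerivAt_int_cos hμ1 y x).fderiv]
  have hint : Integrable (fun u : X => (-Real.sin ⟪x - y, u⟫) • innerSL ℝ (E := X) u) μ :=
    integrable_trig_smul_innerSL (c := fun u => -Real.sin ⟪x - y, u⟫)
      ((Real.continuous_sin.comp (cont_inner_right _)).neg)
      (fun u => by simpa using absin _) hμ1
  rw [ContinuousLinearMap.integral_apply hint v]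
  simp

lemma fderiv_int_cos'_apply (hμ1 : Integrable (fun u : X => ‖u‖) μ) (x y v : X) :
    fderiv ℝ (fun y1 => ∫ u, Real.cos ⟪x - y1, u⟫ ∂μ) y v
      = ∫ u, Real.sin ⟪x - y, u⟫ * ⟪u, v⟫ ∂μ := by
  rw [(hasFDerivAt_int_cos' hμ1 x y).fderiv]
  have hint : Integrable (fun u : X => (Real.sin ⟪x - y, u⟫) • innerSL ℝ (E := X) u) μ :=
    integrable_trig_smul_innerSL (c := fun u => Real.sin ⟪x - y, u⟫)
      (Real.continuous_sin.comp (cont_inner_right _))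
      (fun u => absin _) hμ1
  rw [ContinuousLinearMap.integral_apply hint v]
  simp

lemma fderiv_int_msin_apply (hμ2 : Integrable (fun u : X => ‖u‖ ^ 2) μ) (x w y v : X) :
    fderiv ℝ (fun y1 => ∫ u, -Real.sin ⟪x - y1, u⟫ * ⟪u, w⟫ ∂μ) y v
      = ∫ u, Real.cos ⟪x - y, u⟫ * ⟪u, w⟫ * ⟪u, v⟫ ∂μ := by
  rw [(hasFDerivAt_int_msin hμ2 x w y).fderiv]
  rw [ContinuousLinearMap.integral_apply (integrable_cosmul_innerSL hμ2 x y w) v]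
  simp

/-- real part of the complexified quantity -/
noncomputable def fv (C : X →L[ℝ] X) (x u : X) : X :=
  Real.cos ⟪u, x⟫ • C u - Real.sin ⟪u, x⟫ • x

/-- imaginary part of the complexified quantity -/
noncomputable def gv (C : X →L[ℝ] X) (x u : X) : X :=
  Real.sin ⟪u, x⟫ • C u + Real.cos ⟪u, x⟫ • x

lemma summable_sq {l : ℕ → ℝ} (hl : ∀ i, 0 < l i) (hltr : Summable l) :
    Summable (fun i => l i ^ 2) := by
  refine Summable.of_nonneg_of_le (fun i => sq_nonneg _) (fun i => ?_) (hltr.mul_left (∑' j, l j))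
  have h1 : l i ≤ ∑' j, l j := hltr.le_tsum i (fun j _ => (hl j).le)
  have := (hl i).le
  nlinarith

lemma parseval_C (C : X →L[ℝ] X) (hCsa : IsSelfAdjoint C) (e : HilbertBasis ℕ ℝ X)
    (l : ℕ → ℝ) (hCe : ∀ i, C (e i) = l i • e i) (u : X) :
    ∑' i, l i ^ 2 * (⟪u, e i⟫ * ⟪u, e i⟫) = ‖C u‖ ^ 2 := by
  have h := e.tsum_inner_mul_inner (C u) (C u)
  have hterm : ∀ i, (⟪C u, (e i : X)⟫ * ⟪(e i : X), C u⟫ : ℝ)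
      = l i ^ 2 * (⟪u, e i⟫ * ⟪u, e i⟫) := by
    intro i
    have h1 : (⟪C u, (e i : X)⟫ : ℝ) = l i * ⟪u, e i⟫ := by
      have ha : (⟪C u, (e i : X)⟫ : ℝ) = ⟪u, C (e i)⟫ := hCsa.isSymmetric u (e i)
      rw [ha, hCe i, real_inner_smul_right]
    have h2 : (⟪(e i : X), C u⟫ : ℝ) = l i * ⟪u, e i⟫ := by
      rw [real_inner_comm, h1]
    rw [h1, h2]; ring
  calc ∑' i, l i ^ 2 * (⟪u, e i⟫ * ⟪u, e i⟫)
      = ∑' i, (⟪C u, (e i : X)⟫ * ⟪(e i : X), C u⟫ : ℝ) := by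
        exact (tsum_congr hterm).symm
    _ = ⟪C u, C u⟫ := h
    _ = ‖C u‖ ^ 2 := real_inner_self_eq_norm_sq _

variable {μ : Measure X} [IsFiniteMeasure μ]

lemma integrable_F_term (hμ2 : Integrable (fun u : X => ‖u‖ ^ 2) μ) (x x' w w' : X) :
    Integrable (fun u : X => Real.cos ⟪x - x', u⟫ * ⟪u, w⟫ * ⟪u, w'⟫) μ := by
  refine (hμ2.mul_const (‖w‖ * ‖w'‖)).mono' ?_ (Eventually.of_forall fun u => ?_)
  · exact (((Real.continuous_cos.comp (cont_inner_right _)).mul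
      (continuous_id.inner continuous_const)).mul
      (continuous_id.inner continuous_const)).aestronglyMeasurable
  · have h1 : |(⟪u, w⟫ : ℝ)| ≤ ‖u‖ * ‖w‖ := by simpa using abs_real_inner_le_norm u w
    have h2 : |(⟪u, w'⟫ : ℝ)| ≤ ‖u‖ * ‖w'‖ := by simpa using abs_real_inner_le_norm u w'
    have h3 := abcos (⟪x - x', u⟫ : ℝ)
    rw [Real.norm_eq_abs, abs_mul, abs_mul]
    calc |Real.cos ⟪x - x', u⟫| * |(⟪u, w⟫ : ℝ)| * |(⟪u, w'⟫ : ℝ)|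
        ≤ 1 * (‖u‖ * ‖w‖) * (‖u‖ * ‖w'‖) :=
          mul_le_mul (mul_le_mul h3 h1 (abs_nonneg _) zero_le_one) h2 (abs_nonneg _)
            (by positivity)
      _ = ‖u‖ ^ 2 * (‖w‖ * ‖w'‖) := by ring

lemma stein_pointwise (C : X →L[ℝ] X) (hCsa : IsSelfAdjoint C)
    (e : HilbertBasis ℕ ℝ X) (l : ℕ → ℝ) (hl : ∀ i, 0 < l i)
    (hCe : ∀ i, C (e i) = l i • e i) (hltr : Summable l)
    (hμ1 : Integrable (fun u : X => ‖u‖) μ)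
    (hμ2 : Integrable (fun u : X => ‖u‖ ^ 2) μ) (x x' : X) :
    steinKernelHvGauss (fun a b => ∫ u, Real.cos ⟪a - b, u⟫ ∂μ) C (fun i => e i) l x x'
      = ∫ u, (⟪fv C x u, fv C x' u⟫ + ⟪gv C x u, gv C x' u⟫) ∂μ := by
  have hsym : ∀ a b : X, (⟪a, C b⟫ : ℝ) = ⟪C a, b⟫ := fun a b => (hCsa.isSymmetric a b).symm
  -- second term
  have h2 : fderiv ℝ (fun x1 => ∫ u, Real.cos ⟪x1 - x', u⟫ ∂μ) x (C x')
      = ∫ u, -Real.sin ⟪x - x', u⟫ * ⟪u, C x'⟫ ∂μ := fderiv_int_cos_apply hμ1 x' x (C x')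
  -- third term
  have h3 : fderiv ℝ (fun y1 => ∫ u, Real.cos ⟪x - y1, u⟫ ∂μ) x' (C x)
      = ∫ u, Real.sin ⟪x - x', u⟫ * ⟪u, C x⟫ ∂μ := fderiv_int_cos'_apply hμ1 x x' (C x)
  -- first (second-derivative) term
  have h1 : ∀ i : ℕ, fderiv ℝ (fun y1 => fderiv ℝ
        (fun x1 => ∫ u, Real.cos ⟪x1 - y1, u⟫ ∂μ) x (e i)) x' (e i)
      = ∫ u, Real.cos ⟪x - x', u⟫ * ⟪u, (e i : X)⟫ * ⟪u, (e i : X)⟫ ∂μ := by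
    intro i
    have he : (fun y1 => fderiv ℝ (fun x1 => ∫ u, Real.cos ⟪x1 - y1, u⟫ ∂μ) x (e i))
        = fun y1 => ∫ u, -Real.sin ⟪x - y1, u⟫ * ⟪u, (e i : X)⟫ ∂μ := by
      funext y1; exact fderiv_int_cos_apply hμ1 y1 x (e i)
    rw [he, fderiv_int_msin_apply hμ2 x (e i) x' (e i)]
  -- the tsum
  have htsum : (∑' i, l i ^ 2 *
        ∫ u, Real.cos ⟪x - x', u⟫ * ⟪u, (e i : X)⟫ * ⟪u, (e i : X)⟫ ∂μ)
      = ∫ u, Real.cos ⟪x - x', u⟫ * ‖C u‖ ^ 2 ∂μ := by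
    set F : ℕ → X → ℝ := fun i u =>
      l i ^ 2 * (Real.cos ⟪x - x', u⟫ * ⟪u, (e i : X)⟫ * ⟪u, (e i : X)⟫) with hF
    have hFi : ∀ i, Integrable (F i) μ := fun i =>
      (integrable_F_term hμ2 x x' (e i) (e i)).const_mul _
    have hFnorm : ∀ i, (∫ u, ‖F i u‖ ∂μ) ≤ l i ^ 2 * ‖(e i : X)‖ ^ 2 * ∫ u, ‖u‖ ^ 2 ∂μ := by
      intro i
      have : ∀ u : X, ‖F i u‖ ≤ l i ^ 2 * ‖(e i : X)‖ ^ 2 * ‖u‖ ^ 2 := by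
        intro u
        rw [hF]
        simp only [Real.norm_eq_abs, abs_mul, _root_.abs_pow, _root_.sq_abs]
        have h1 : |(⟪u, (e i : X)⟫ : ℝ)| ≤ ‖u‖ * ‖(e i : X)‖ := by
          simpa using abs_real_inner_le_norm u (e i)
        have h3 := abcos (⟪x - x', u⟫ : ℝ)
        calc l i ^ 2 * (|Real.cos ⟪x - x', u⟫| * |(⟪u, (e i : X)⟫ : ℝ)| * |(⟪u, (e i : X)⟫ : ℝ)|)
            ≤ l i ^ 2 * (1 * (‖u‖ * ‖(e i : X)‖) * (‖u‖ * ‖(e i : X)‖)) := by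
              refine mul_le_mul_of_nonneg_left ?_ (sq_nonneg _)
              exact mul_le_mul (mul_le_mul h3 h1 (abs_nonneg _) zero_le_one) h1 (abs_nonneg _)
                (by positivity)
          _ = l i ^ 2 * ‖(e i : X)‖ ^ 2 * ‖u‖ ^ 2 := by ring
      calc (∫ u, ‖F i u‖ ∂μ) ≤ ∫ u, l i ^ 2 * ‖(e i : X)‖ ^ 2 * ‖u‖ ^ 2 ∂μ :=
          integral_mono (hFi i).norm (hμ2.const_mul _) this
        _ = l i ^ 2 * ‖(e i : X)‖ ^ 2 * ∫ u, ‖u‖ ^ 2 ∂μ := integral_const_mul _ _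
    have hnorm1 : ∀ i, ‖(e i : X)‖ = 1 := fun i => e.orthonormal.1 i
    have hsummable : Summable (fun i => ∫ u, ‖F i u‖ ∂μ) := by
      refine Summable.of_nonneg_of_le (fun i => integral_nonneg fun u => norm_nonneg _)
        (fun i => ?_) ((summable_sq hl hltr).mul_right (∫ u, ‖u‖ ^ 2 ∂μ))
      calc (∫ u, ‖F i u‖ ∂μ) ≤ l i ^ 2 * ‖(e i : X)‖ ^ 2 * ∫ u, ‖u‖ ^ 2 ∂μ := hFnorm i
        _ = l i ^ 2 * ∫ u, ‖u‖ ^ 2 ∂μ := by rw [hnorm1 i]; ring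
    calc (∑' i, l i ^ 2 * ∫ u, Real.cos ⟪x - x', u⟫ * ⟪u, (e i : X)⟫ * ⟪u, (e i : X)⟫ ∂μ)
        = ∑' i, ∫ u, F i u ∂μ := by
          refine tsum_congr fun i => ?_
          rw [hF]
          exact (integral_const_mul _ _).symm
      _ = ∫ u, (∑' i, F i u) ∂μ := integral_tsum_of_summable_integral_norm hFi hsummable
      _ = ∫ u, Real.cos ⟪x - x', u⟫ * ‖C u‖ ^ 2 ∂μ := by
          refine integral_congr_ae (Eventually.of_forall fun u => ?_)
          rw [hF]
          calc (∑' i, l i ^ 2 * (Real.cos ⟪x - x', u⟫ * ⟪u, (e i : X)⟫ * ⟪u, (e i : X)⟫))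
              = ∑' i, Real.cos ⟪x - x', u⟫ * (l i ^ 2 * (⟪u, (e i : X)⟫ * ⟪u, (e i : X)⟫)) := by
                exact tsum_congr fun i => by ring
            _ = Real.cos ⟪x - x', u⟫ * ∑' i, l i ^ 2 * (⟪u, (e i : X)⟫ * ⟪u, (e i : X)⟫) :=
                tsum_mul_left
            _ = Real.cos ⟪x - x', u⟫ * ‖C u‖ ^ 2 := by rw [parseval_C C hCsa e l hCe u]
  -- the zeroth term
  have h4 : (∫ u, Real.cos ⟪x - x', u⟫ ∂μ) * ⟪x, x'⟫
      = ∫ u, Real.cos ⟪x - x', u⟫ * ⟪x, x'⟫ ∂μ := (integral_mul_const _ _).symm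
  -- integrabilities
  have hiA : Integrable (fun u : X => Real.cos ⟪x - x', u⟫ * ‖C u‖ ^ 2) μ := by
    refine (hμ2.const_mul (‖C‖ ^ 2)).mono' ?_ (Eventually.of_forall fun u => ?_)
    · exact ((Real.continuous_cos.comp (cont_inner_right _)).mul
        ((C.continuous.norm).pow 2)).aestronglyMeasurable
    · rw [Real.norm_eq_abs, abs_mul]
      have hC := C.le_opNorm u
      have hstep : |Real.cos ⟪x - x', u⟫| * |‖C u‖ ^ 2| ≤ 1 * (‖C‖ * ‖u‖) ^ 2 := by
        rw [_root_.abs_pow, _root_.sq_abs]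
        refine mul_le_mul (abcos _) ?_ (by positivity) zero_le_one
        gcongr
      calc |Real.cos ⟪x - x', u⟫| * |‖C u‖ ^ 2| ≤ 1 * (‖C‖ * ‖u‖) ^ 2 := hstep
        _ = ‖C‖ ^ 2 * ‖u‖ ^ 2 := by ring
  have hiB : Integrable (fun u : X => -Real.sin ⟪x - x', u⟫ * ⟪u, C x'⟫) μ := by
    refine (hμ1.mul_const ‖C x'‖).mono' ?_ (Eventually.of_forall fun u => ?_)
    · exact (((Real.continuous_sin.comp (cont_inner_right _)).neg).mul
        (continuous_id.inner continuous_const)).aestronglyMeasurable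
    · rw [Real.norm_eq_abs, abs_mul, abs_neg]
      simpa using mul_le_mul (absin (⟪x - x', u⟫ : ℝ)) (abs_real_inner_le_norm u (C x'))
        (abs_nonneg _) zero_le_one
  have hiB2 : Integrable (fun u : X => Real.sin ⟪x - x', u⟫ * ⟪u, C x⟫) μ := by
    refine (hμ1.mul_const ‖C x‖).mono' ?_ (Eventually.of_forall fun u => ?_)
    · exact ((Real.continuous_sin.comp (cont_inner_right _)).mul
        (continuous_id.inner continuous_const)).aestronglyMeasurable
    · rw [Real.norm_eq_abs, abs_mul]
      simpa using mul_le_mul (absin (⟪x - x', u⟫ : ℝ)) (abs_real_inner_le_norm u (C x))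
        (abs_nonneg _) zero_le_one
  have hiD : Integrable (fun u : X => Real.cos ⟪x - x', u⟫ * ⟪x, x'⟫) μ := by
    refine (integrable_const (|(⟪x, x'⟫ : ℝ)|)).mono' ?_ (Eventually.of_forall fun u => ?_)
    · exact ((Real.continuous_cos.comp (cont_inner_right _)).mul
        continuous_const).aestronglyMeasurable
    · rw [Real.norm_eq_abs, abs_mul]
      simpa using mul_le_mul_of_nonneg_right (abcos (⟪x - x', u⟫ : ℝ)) (abs_nonneg (⟪x, x'⟫ : ℝ))
  -- put everything together
  simp only [steinKernelHvGauss]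
  rw [h2, h3, h4]
  rw [show (∑' i, l i ^ 2 * fderiv ℝ (fun y1 => fderiv ℝ
        (fun x1 => ∫ u, Real.cos ⟪x1 - y1, u⟫ ∂μ) x (e i)) x' (e i))
      = ∫ u, Real.cos ⟪x - x', u⟫ * ‖C u‖ ^ 2 ∂μ from by
    rw [← htsum]; exact tsum_congr fun i => by rw [h1 i]]
  have e3 : ∫ u, (Real.cos ⟪x - x', u⟫ * ‖C u‖ ^ 2 - -Real.sin ⟪x - x', u⟫ * ⟪u, C x'⟫) ∂μ
      = (∫ u, Real.cos ⟪x - x', u⟫ * ‖C u‖ ^ 2 ∂μ)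
        - ∫ u, -Real.sin ⟪x - x', u⟫ * ⟪u, C x'⟫ ∂μ := integral_sub hiA hiB
  have e2 : ∫ u, (Real.cos ⟪x - x', u⟫ * ‖C u‖ ^ 2 - -Real.sin ⟪x - x', u⟫ * ⟪u, C x'⟫
        - Real.sin ⟪x - x', u⟫ * ⟪u, C x⟫) ∂μ
      = (∫ u, (Real.cos ⟪x - x', u⟫ * ‖C u‖ ^ 2 - -Real.sin ⟪x - x', u⟫ * ⟪u, C x'⟫) ∂μ)
        - ∫ u, Real.sin ⟪x - x', u⟫ * ⟪u, C x⟫ ∂μ := integral_sub (hiA.sub hiB) hiB2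
  have e1 : ∫ u, (Real.cos ⟪x - x', u⟫ * ‖C u‖ ^ 2 - -Real.sin ⟪x - x', u⟫ * ⟪u, C x'⟫
        - Real.sin ⟪x - x', u⟫ * ⟪u, C x⟫ + Real.cos ⟪x - x', u⟫ * ⟪x, x'⟫) ∂μ
      = (∫ u, (Real.cos ⟪x - x', u⟫ * ‖C u‖ ^ 2 - -Real.sin ⟪x - x', u⟫ * ⟪u, C x'⟫
          - Real.sin ⟪x - x', u⟫ * ⟪u, C x⟫) ∂μ)
        + ∫ u, Real.cos ⟪x - x', u⟫ * ⟪x, x'⟫ ∂μ := integral_add ((hiA.sub hiB).sub hiB2) hiD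
  rw [← e3, ← e2, ← e1]
  refine integral_congr_ae (Eventually.of_forall fun u => ?_)
  beta_reduce
  have hxu : (⟪x - x', u⟫ : ℝ) = ⟪u, x⟫ - ⟪u, x'⟫ := by
    rw [inner_sub_left, real_inner_comm x u, real_inner_comm x' u]
  rw [hxu, Real.cos_sub, Real.sin_sub]
  simp only [fv, gv, inner_sub_left, inner_sub_right, inner_add_left, inner_add_right,
    real_inner_smul_left, real_inner_smul_right]
  rw [hsym u x', hsym u x, ← real_inner_self_eq_norm_sq (C u)]
  rw [real_inner_comm x' x, real_inner_comm x (C u), real_inner_comm x' (C u)]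
  ring

lemma int_norm_of_sq {ν : Measure X} [IsFiniteMeasure ν]
    (h2 : Integrable (fun x : X => ‖x‖ ^ 2) ν) : Integrable (fun x : X => ‖x‖) ν := by
  refine ((integrable_const (1:ℝ)).add h2).mono' continuous_norm.aestronglyMeasurable
    (Eventually.of_forall fun x => ?_)
  rw [norm_norm]
  simp only [Pi.add_apply]
  nlinarith [sq_nonneg (‖x‖ - 1)]

lemma k_eq_cos {μ : Measure X} [IsFiniteMeasure μ] (k : X → X → ℝ)
    (hk : ∀ x y : X, (k x y : ℂ) = ∫ u, Complex.exp ((⟪x - y, u⟫ : ℂ) * Complex.I) ∂μ) :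
    k = fun x y => ∫ u, Real.cos ⟪x - y, u⟫ ∂μ := by
  funext x y
  have hint : Integrable (fun u : X => Complex.exp ((⟪x - y, u⟫ : ℂ) * Complex.I)) μ := by
    refine (integrable_const (1:ℝ)).mono' ?_ (Eventually.of_forall fun u => ?_)
    · exact (Complex.continuous_exp.comp
        ((Complex.continuous_ofReal.comp (cont_inner_right _)).mul
          continuous_const)).aestronglyMeasurable
    · rw [Complex.norm_exp_ofReal_mul_I]
  have h := congrArg Complex.re (hk x y)
  rw [Complex.ofReal_re] at h
  rw [h]
  have h2 := integral_re hint
  simp only [RCLike.re_to_complex] at h2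
  rw [← h2]
  refine (integral_congr_ae (Eventually.of_forall fun u => ?_)).symm
  simp [Complex.exp_ofReal_mul_I_re]

lemma norm_fv_le (C : X →L[ℝ] X) (x u : X) : ‖fv C x u‖ ≤ ‖C u‖ + ‖x‖ := by
  unfold fv
  refine (norm_sub_le _ _).trans ?_
  rw [norm_smul, norm_smul, Real.norm_eq_abs, Real.norm_eq_abs]
  have h1 := mul_le_mul_of_nonneg_right (abcos (⟪u, x⟫ : ℝ)) (norm_nonneg (C u))
  have h2 := mul_le_mul_of_nonneg_right (absin (⟪u, x⟫ : ℝ)) (norm_nonneg x)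
  linarith

lemma norm_gv_le (C : X →L[ℝ] X) (x u : X) : ‖gv C x u‖ ≤ ‖C u‖ + ‖x‖ := by
  unfold gv
  refine (norm_add_le _ _).trans ?_
  rw [norm_smul, norm_smul, Real.norm_eq_abs, Real.norm_eq_abs]
  have h1 := mul_le_mul_of_nonneg_right (absin (⟪u, x⟫ : ℝ)) (norm_nonneg (C u))
  have h2 := mul_le_mul_of_nonneg_right (abcos (⟪u, x⟫ : ℝ)) (norm_nonneg x)
  linarith

lemma abs_G_le (C : X →L[ℝ] X) (x x' u : X) :
    |⟪fv C x u, fv C x' u⟫ + ⟪gv C x u, gv C x' u⟫|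
      ≤ 2 * ((‖C u‖ + ‖x‖) * (‖C u‖ + ‖x'‖)) := by
  have h1 : |(⟪fv C x u, fv C x' u⟫ : ℝ)| ≤ (‖C u‖ + ‖x‖) * (‖C u‖ + ‖x'‖) :=
    (abs_real_inner_le_norm _ _).trans
      (mul_le_mul (norm_fv_le C x u) (norm_fv_le C x' u) (norm_nonneg _)
        (by positivity))
  have h2 : |(⟪gv C x u, gv C x' u⟫ : ℝ)| ≤ (‖C u‖ + ‖x‖) * (‖C u‖ + ‖x'‖) :=
    (abs_real_inner_le_norm _ _).trans
      (mul_le_mul (norm_gv_le C x u) (norm_gv_le C x' u) (norm_nonneg _)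
        (by positivity))
  calc |⟪fv C x u, fv C x' u⟫ + ⟪gv C x u, gv C x' u⟫|
      ≤ |(⟪fv C x u, fv C x' u⟫ : ℝ)| + |(⟪gv C x u, gv C x' u⟫ : ℝ)| := abs_add_le _ _
    _ ≤ 2 * ((‖C u‖ + ‖x‖) * (‖C u‖ + ‖x'‖)) := by linarith

lemma cont_fv (C : X →L[ℝ] X) : Continuous (fun q : X × X => fv C q.1 q.2) := by
  unfold fv
  exact ((Real.continuous_cos.comp (continuous_snd.inner continuous_fst)).smul
      (C.continuous.comp continuous_snd)).sub
    ((Real.continuous_sin.comp (continuous_snd.inner continuous_fst)).smul continuous_fst)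

lemma cont_gv (C : X →L[ℝ] X) : Continuous (fun q : X × X => gv C q.1 q.2) := by
  unfold gv
  exact ((Real.continuous_sin.comp (continuous_snd.inner continuous_fst)).smul
      (C.continuous.comp continuous_snd)).add
    ((Real.continuous_cos.comp (continuous_snd.inner continuous_fst)).smul continuous_fst)

lemma integrable_fv (C : X →L[ℝ] X) {Q : Measure X} [IsFiniteMeasure Q]
    (hQ1 : Integrable (fun x : X => ‖x‖) Q) (u : X) :
    Integrable (fun x => fv C x u) Q := by
  refine ((integrable_const ‖C u‖).add hQ1).mono' ?_
    (Eventually.of_forall fun x => norm_fv_le C x u)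
  exact ((cont_fv C).comp (continuous_id.prodMk continuous_const)).aestronglyMeasurable

lemma integrable_gv (C : X →L[ℝ] X) {Q : Measure X} [IsFiniteMeasure Q]
    (hQ1 : Integrable (fun x : X => ‖x‖) Q) (u : X) :
    Integrable (fun x => gv C x u) Q := by
  refine ((integrable_const ‖C u‖).add hQ1).mono' ?_
    (Eventually.of_forall fun x => norm_gv_le C x u)
  exact ((cont_gv C).comp (continuous_id.prodMk continuous_const)).aestronglyMeasurable

lemma key_per_u (C : X →L[ℝ] X) (Q : Measure X) [IsProbabilityMeasure Q]
    (hQ1 : Integrable (fun x : X => ‖x‖) Q) (u : X) :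
    ∫ x, ∫ x', (⟪fv C x u, fv C x' u⟫ + ⟪gv C x u, gv C x' u⟫) ∂Q ∂Q
      = ‖(∫ x, Real.cos ⟪u, x⟫ ∂Q) • C u + ∫ x, (-Real.sin ⟪u, x⟫) • x ∂Q‖ ^ 2
        + ‖(∫ x, Real.sin ⟪u, x⟫ ∂Q) • C u + ∫ x, Real.cos ⟪u, x⟫ • x ∂Q‖ ^ 2 := by
  have hif := integrable_fv C hQ1 u
  have hig := integrable_gv C hQ1 u
  set F := ∫ x, fv C x u ∂Q with hF
  set G := ∫ x, gv C x u ∂Q with hG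
  -- inner products integrable
  have hinf : ∀ c : X, Integrable (fun x : X => (⟪c, fv C x u⟫ : ℝ)) Q := fun c => by
    simpa using (innerSL ℝ c).integrable_comp hif
  have hing : ∀ c : X, Integrable (fun x : X => (⟪c, gv C x u⟫ : ℝ)) Q := fun c => by
    simpa using (innerSL ℝ c).integrable_comp hig
  have step1 : ∀ x : X, ∫ x', (⟪fv C x u, fv C x' u⟫ + ⟪gv C x u, gv C x' u⟫) ∂Q
      = ⟪fv C x u, F⟫ + ⟪gv C x u, G⟫ := by
    intro x
    rw [integral_add (hinf (fv C x u)) (hing (gv C x u)),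
      integral_inner hif, integral_inner hig]
  have hix1 : Integrable (fun x : X => (⟪fv C x u, F⟫ : ℝ)) Q :=
    (hinf F).congr (Eventually.of_forall fun x => real_inner_comm (fv C x u) F)
  have hix2 : Integrable (fun x : X => (⟪gv C x u, G⟫ : ℝ)) Q :=
    (hing G).congr (Eventually.of_forall fun x => real_inner_comm (gv C x u) G)
  rw [integral_congr_ae (Eventually.of_forall step1)]
  beta_reduce
  rw [integral_add hix1 hix2]
  have hF2 : ∫ x, (⟪fv C x u, F⟫ : ℝ) ∂Q = ‖F‖ ^ 2 := by
    rw [integral_congr_ae (Eventually.of_forall fun x => real_inner_comm F (fv C x u))]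
    beta_reduce
    rw [integral_inner hif, ← hF, real_inner_self_eq_norm_sq]
  have hG2 : ∫ x, (⟪gv C x u, G⟫ : ℝ) ∂Q = ‖G‖ ^ 2 := by
    rw [integral_congr_ae (Eventually.of_forall fun x => real_inner_comm G (gv C x u))]
    beta_reduce
    rw [integral_inner hig, ← hG, real_inner_self_eq_norm_sq]
  rw [hF2, hG2]
  -- identify F and G
  have hcos : Integrable (fun x : X => Real.cos ⟪u, x⟫) Q := by
    refine (integrable_const (1:ℝ)).mono'
      (Real.continuous_cos.comp (cont_inner_right _)).aestronglyMeasurable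
      (Eventually.of_forall fun x => by simpa using abcos _)
  have hsin : Integrable (fun x : X => Real.sin ⟪u, x⟫) Q := by
    refine (integrable_const (1:ℝ)).mono'
      (Real.continuous_sin.comp (cont_inner_right _)).aestronglyMeasurable
      (Eventually.of_forall fun x => by simpa using absin _)
  have hsinx : Integrable (fun x : X => Real.sin ⟪u, x⟫ • x) Q := by
    refine hQ1.mono' ?_ (Eventually.of_forall fun x => ?_)
    · exact ((Real.continuous_sin.comp (cont_inner_right _)).smul continuous_id).aestronglyMeasurable
    · rw [norm_smul, Real.norm_eq_abs]
      simpa using mul_le_mul_of_nonneg_right (absin (⟪u, x⟫ : ℝ)) (norm_nonneg x)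
  have hcosx : Integrable (fun x : X => Real.cos ⟪u, x⟫ • x) Q := by
    refine hQ1.mono' ?_ (Eventually.of_forall fun x => ?_)
    · exact ((Real.continuous_cos.comp (cont_inner_right _)).smul continuous_id).aestronglyMeasurable
    · rw [norm_smul, Real.norm_eq_abs]
      simpa using mul_le_mul_of_nonneg_right (abcos (⟪u, x⟫ : ℝ)) (norm_nonneg x)
  have hFeq : F = (∫ x, Real.cos ⟪u, x⟫ ∂Q) • C u + ∫ x, (-Real.sin ⟪u, x⟫) • x ∂Q := by
    rw [hF]
    calc ∫ x, fv C x u ∂Q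
        = (∫ x, Real.cos ⟪u, x⟫ • C u ∂Q) - ∫ x, Real.sin ⟪u, x⟫ • x ∂Q :=
          integral_sub (hcos.smul_const (C u)) hsinx
      _ = (∫ x, Real.cos ⟪u, x⟫ ∂Q) • C u - ∫ x, Real.sin ⟪u, x⟫ • x ∂Q := by
          rw [integral_smul_const]
      _ = (∫ x, Real.cos ⟪u, x⟫ ∂Q) • C u + ∫ x, (-Real.sin ⟪u, x⟫) • x ∂Q := by
          rw [sub_eq_add_neg, ← integral_neg]
          congr 1
          exact integral_congr_ae (Eventually.of_forall fun x => (neg_smul _ _).symm)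
  have hGeq : G = (∫ x, Real.sin ⟪u, x⟫ ∂Q) • C u + ∫ x, Real.cos ⟪u, x⟫ • x ∂Q := by
    rw [hG]
    calc ∫ x, gv C x u ∂Q
        = (∫ x, Real.sin ⟪u, x⟫ • C u ∂Q) + ∫ x, Real.cos ⟪u, x⟫ • x ∂Q :=
          integral_add (hsin.smul_const (C u)) hcosx
      _ = (∫ x, Real.sin ⟪u, x⟫ ∂Q) • C u + ∫ x, Real.cos ⟪u, x⟫ • x ∂Q := by
          rw [integral_smul_const]
  rw [hFeq, hGeq]

lemma cont_fv2 (C : X →L[ℝ] X) {α : Type*} [TopologicalSpace α] {a b : α → X}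
    (ha : Continuous a) (hb : Continuous b) : Continuous (fun t => fv C (a t) (b t)) := by
  unfold fv
  exact ((Real.continuous_cos.comp (hb.inner ha)).smul (C.continuous.comp hb)).sub
    ((Real.continuous_sin.comp (hb.inner ha)).smul ha)

lemma cont_gv2 (C : X →L[ℝ] X) {α : Type*} [TopologicalSpace α] {a b : α → X}
    (ha : Continuous a) (hb : Continuous b) : Continuous (fun t => gv C (a t) (b t)) := by
  unfold gv
  exact ((Real.continuous_sin.comp (hb.inner ha)).smul (C.continuous.comp hb)).add
    ((Real.continuous_cos.comp (hb.inner ha)).smul ha)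

lemma cont_G (C : X →L[ℝ] X) : Continuous (fun p : (X × X) × X =>
    (⟪fv C p.1.1 p.2, fv C p.1.2 p.2⟫ : ℝ) + ⟪gv C p.1.1 p.2, gv C p.1.2 p.2⟫) := by
  have c1 : Continuous (fun p : (X × X) × X => p.1.1) := continuous_fst.fst
  have c2 : Continuous (fun p : (X × X) × X => p.1.2) := continuous_fst.snd
  have c3 : Continuous (fun p : (X × X) × X => p.2) := continuous_snd
  exact ((cont_fv2 C c1 c3).inner (cont_fv2 C c2 c3)).add
    ((cont_gv2 C c1 c3).inner (cont_gv2 C c2 c3))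

lemma integrable_bound4 (C : X →L[ℝ] X) {Q μ : Measure X} [IsFiniteMeasure Q]
    [IsFiniteMeasure μ] (hQ1 : Integrable (fun x : X => ‖x‖) Q)
    (hμC1 : Integrable (fun u : X => ‖C u‖) μ)
    (hμC2 : Integrable (fun u : X => ‖C u‖ ^ 2) μ) (a : ℝ) :
    Integrable (fun z : X × X => 2 * ‖C z.2‖ ^ 2 + ‖z.1‖ * (2 * ‖C z.2‖)
      + (2 * a) * ‖C z.2‖ + ‖z.1‖ * (2 * a)) (Q.prod μ) := by
  have i1 : Integrable (fun z : X × X => (2:ℝ) * ‖C z.2‖ ^ 2) (Q.prod μ) :=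
    (integrable_const (2:ℝ)).mul_prod hμC2
  have i2 : Integrable (fun z : X × X => ‖z.1‖ * (2 * ‖C z.2‖)) (Q.prod μ) :=
    hQ1.mul_prod (hμC1.const_mul 2)
  have i3 : Integrable (fun z : X × X => (2 * a) * ‖C z.2‖) (Q.prod μ) :=
    (integrable_const (2 * a)).mul_prod hμC1
  have i4 : Integrable (fun z : X × X => ‖z.1‖ * (2 * a)) (Q.prod μ) :=
    hQ1.mul_prod (integrable_const (2 * a))
  exact ((i1.add i2).add i3).add i4

lemma swap1 (C : X →L[ℝ] X) {Q μ : Measure X} [IsFiniteMeasure Q] [IsFiniteMeasure μ]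
    (hQ1 : Integrable (fun x : X => ‖x‖) Q)
    (hμC1 : Integrable (fun u : X => ‖C u‖) μ)
    (hμC2 : Integrable (fun u : X => ‖C u‖ ^ 2) μ) (x : X) :
    ∫ x', ∫ u, ((⟪fv C x u, fv C x' u⟫ : ℝ) + ⟪gv C x u, gv C x' u⟫) ∂μ ∂Q
      = ∫ u, ∫ x', ((⟪fv C x u, fv C x' u⟫ : ℝ) + ⟪gv C x u, gv C x' u⟫) ∂Q ∂μ := by
  apply integral_integral_swap
  refine (integrable_bound4 C hQ1 hμC1 hμC2 ‖x‖).mono' ?_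
    (Eventually.of_forall fun z => ?_)
  · exact ((cont_G C).comp
      ((continuous_const.prodMk continuous_fst).prodMk continuous_snd)).aestronglyMeasurable
  · show ‖(⟪fv C x z.2, fv C z.1 z.2⟫ : ℝ) + ⟪gv C x z.2, gv C z.1 z.2⟫‖ ≤ _
    rw [Real.norm_eq_abs]
    calc |(⟪fv C x z.2, fv C z.1 z.2⟫ : ℝ) + ⟪gv C x z.2, gv C z.1 z.2⟫|
        ≤ 2 * ((‖C z.2‖ + ‖x‖) * (‖C z.2‖ + ‖z.1‖)) := abs_G_le C x z.1 z.2
      _ = 2 * ‖C z.2‖ ^ 2 + ‖z.1‖ * (2 * ‖C z.2‖) + (2 * ‖x‖) * ‖C z.2‖ + ‖z.1‖ * (2 * ‖x‖) := by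
          ring

lemma swap2 (C : X →L[ℝ] X) {Q μ : Measure X} [IsProbabilityMeasure Q] [IsFiniteMeasure μ]
    (hQ1 : Integrable (fun x : X => ‖x‖) Q)
    (hμC1 : Integrable (fun u : X => ‖C u‖) μ)
    (hμC2 : Integrable (fun u : X => ‖C u‖ ^ 2) μ) :
    ∫ x, ∫ u, (∫ x', ((⟪fv C x u, fv C x' u⟫ : ℝ) + ⟪gv C x u, gv C x' u⟫) ∂Q) ∂μ ∂Q
      = ∫ u, ∫ x, (∫ x', ((⟪fv C x u, fv C x' u⟫ : ℝ) + ⟪gv C x u, gv C x' u⟫) ∂Q) ∂Q ∂μ := by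
  set M : ℝ := ∫ x, ‖x‖ ∂Q with hM
  have hMnn : 0 ≤ M := integral_nonneg fun x => norm_nonneg _
  apply integral_integral_swap
  have hsm : StronglyMeasurable (fun q : (X × X) × X =>
      (⟪fv C q.1.1 q.1.2, fv C q.2 q.1.2⟫ : ℝ) + ⟪gv C q.1.1 q.1.2, gv C q.2 q.1.2⟫) := by
    have c1 : Continuous (fun q : (X × X) × X => q.1.1) := continuous_fst.fst
    have c2 : Continuous (fun q : (X × X) × X => q.1.2) := continuous_fst.snd
    have c3 : Continuous (fun q : (X × X) × X => q.2) := continuous_snd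
    exact (((cont_fv2 C c1 c2).inner (cont_fv2 C c3 c2)).add
      ((cont_gv2 C c1 c2).inner (cont_gv2 C c3 c2))).stronglyMeasurable
  refine (integrable_bound4 C hQ1 hμC1 hμC2 M).mono'
    hsm.integral_prod_right'.aestronglyMeasurable (Eventually.of_forall fun z => ?_)
  show ‖∫ x', ((⟪fv C z.1 z.2, fv C x' z.2⟫ : ℝ) + ⟪gv C z.1 z.2, gv C x' z.2⟫) ∂Q‖ ≤ _
  have hint : Integrable (fun x' : X => (2 * (‖C z.2‖ + ‖z.1‖)) * (‖C z.2‖ + ‖x'‖)) Q :=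
    (((integrable_const ‖C z.2‖).add hQ1).const_mul (2 * (‖C z.2‖ + ‖z.1‖)))
  have hb : ‖∫ x', ((⟪fv C z.1 z.2, fv C x' z.2⟫ : ℝ) + ⟪gv C z.1 z.2, gv C x' z.2⟫) ∂Q‖
      ≤ ∫ x', (2 * (‖C z.2‖ + ‖z.1‖)) * (‖C z.2‖ + ‖x'‖) ∂Q := by
    refine norm_integral_le_of_norm_le hint (Eventually.of_forall fun x' => ?_)
    rw [Real.norm_eq_abs]
    calc |(⟪fv C z.1 z.2, fv C x' z.2⟫ : ℝ) + ⟪gv C z.1 z.2, gv C x' z.2⟫|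
        ≤ 2 * ((‖C z.2‖ + ‖z.1‖) * (‖C z.2‖ + ‖x'‖)) := abs_G_le C z.1 x' z.2
      _ = (2 * (‖C z.2‖ + ‖z.1‖)) * (‖C z.2‖ + ‖x'‖) := by ring
  have hval : ∫ x', (2 * (‖C z.2‖ + ‖z.1‖)) * (‖C z.2‖ + ‖x'‖) ∂Q
      = (2 * (‖C z.2‖ + ‖z.1‖)) * (‖C z.2‖ + M) := by
    rw [integral_const_mul]
    congr 1
    rw [integral_add (integrable_const _) hQ1, ← hM]
    simp
  refine hb.trans ?_
  rw [hval]
  have : (2 * (‖C z.2‖ + ‖z.1‖)) * (‖C z.2‖ + M)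
      = 2 * ‖C z.2‖ ^ 2 + ‖z.1‖ * (2 * ‖C z.2‖) + (2 * M) * ‖C z.2‖ + ‖z.1‖ * (2 * M) := by
    ring
  rw [this]

end Aux

/-- **Stein–Tikhomirov form of the spectral representation for a Gaussian target**
(Remark 4): the KSD with target `N_C` equals
`∫ ‖Cs Q̂(s) + DQ̂(s)‖²_{X_ℂ} dμ(s)`, where `Q̂(s) = ∫ e^{i⟪s,x⟫} dQ(x)` and
`DQ̂(s) = i ∫ x e^{i⟪s,x⟫} dQ(x)`.  The element `Cs Q̂(s) + DQ̂(s)` of the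
complexification `X_ℂ` has real part `(∫ cos⟪s,x⟫ dQ) • Cs + ∫ (-sin⟪s,x⟫) • x dQ`
and imaginary part `(∫ sin⟪s,x⟫ dQ) • Cs + ∫ cos⟪s,x⟫ • x dQ`, and its squared
`X_ℂ`-norm is the sum of the squared norms of these two parts. -/
theorem ksd_gaussian_stein_tikhomirov
    {X : Type*} [NormedAddCommGroup X] [InnerProductSpace ℝ X] [CompleteSpace X]
    [MeasurableSpace X] [BorelSpace X] [SecondCountableTopology X]
    -- the covariance operator and its eigendecomposition
    (C : X →L[ℝ] X) (hCsa : IsSelfAdjoint C)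
    (e : HilbertBasis ℕ ℝ X) (l : ℕ → ℝ) (hl : ∀ i, 0 < l i)
    (hCe : ∀ i, C (e i) = l i • e i) (hltr : Summable l)
    -- the candidate measure `Q` and its moment condition
    (Q : Measure X) [IsProbabilityMeasure Q]
    (hQ2 : Integrable (fun x => ‖x‖ ^ 2) Q)
    -- the spectral measure `μ` and the kernel `k`
    (μ : Measure X) [IsFiniteMeasure μ]
    (hμsymm : Measure.map (fun u => -u) μ = μ)
    (hμ2 : Integrable (fun s => ‖s‖ ^ 2) μ)
    (k : X → X → ℝ)
    (hk : ∀ x y : X, (k x y : ℂ) = ∫ u, Complex.exp ((⟪x - y, u⟫ : ℂ) * Complex.I) ∂μ) :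
    ∫ x, ∫ x', steinKernelHvGauss k C (fun i => e i) l x x' ∂Q ∂Q
      = ∫ s,
          (‖(∫ x, Real.cos ⟪s, x⟫ ∂Q) • C s + ∫ x, (-Real.sin ⟪s, x⟫) • x ∂Q‖ ^ 2
          + ‖(∫ x, Real.sin ⟪s, x⟫ ∂Q) • C s + ∫ x, Real.cos ⟪s, x⟫ • x ∂Q‖ ^ 2) ∂μ := by
  have hμ1 := int_norm_of_sq hμ2
  have hQ1 := int_norm_of_sq hQ2
  have hμC1 : Integrable (fun u : X => ‖C u‖) μ := by
    refine (hμ1.const_mul ‖C‖).mono' (C.continuous.norm.aestronglyMeasurable)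
      (Eventually.of_forall fun u => ?_)
    rw [norm_norm]
    exact C.le_opNorm u
  have hμC2 : Integrable (fun u : X => ‖C u‖ ^ 2) μ := by
    refine (hμ2.const_mul (‖C‖ ^ 2)).mono' ((C.continuous.norm.pow 2).aestronglyMeasurable)
      (Eventually.of_forall fun u => ?_)
    rw [Real.norm_eq_abs, _root_.abs_of_nonneg (by positivity)]
    calc ‖C u‖ ^ 2 ≤ (‖C‖ * ‖u‖) ^ 2 := pow_le_pow_left₀ (norm_nonneg _) (C.le_opNorm u) 2
      _ = ‖C‖ ^ 2 * ‖u‖ ^ 2 := by ring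
  have hkc := k_eq_cos k hk
  subst hkc
  calc ∫ x, ∫ x', steinKernelHvGauss (fun x y => ∫ u, Real.cos ⟪x - y, u⟫ ∂μ) C
        (fun i => e i) l x x' ∂Q ∂Q
      = ∫ x, ∫ x', ∫ u, ((⟪fv C x u, fv C x' u⟫ : ℝ) + ⟪gv C x u, gv C x' u⟫) ∂μ ∂Q ∂Q := by
        refine integral_congr_ae (Eventually.of_forall fun x => ?_)
        beta_reduce
        refine integral_congr_ae (Eventually.of_forall fun x' => ?_)
        beta_reduce
        exact stein_pointwise C hCsa e l hl hCe hltr hμ1 hμ2 x x'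
    _ = ∫ x, ∫ u, ∫ x', ((⟪fv C x u, fv C x' u⟫ : ℝ) + ⟪gv C x u, gv C x' u⟫) ∂Q ∂μ ∂Q := by
        refine integral_congr_ae (Eventually.of_forall fun x => ?_)
        beta_reduce
        exact swap1 C hQ1 hμC1 hμC2 x
    _ = ∫ u, ∫ x, ∫ x', ((⟪fv C x u, fv C x' u⟫ : ℝ) + ⟪gv C x u, gv C x' u⟫) ∂Q ∂Q ∂μ :=
        swap2 C hQ1 hμC1 hμC2
    _ = ∫ s,
          (‖(∫ x, Real.cos ⟪s, x⟫ ∂Q) • C s + ∫ x, (-Real.sin ⟪s, x⟫) • x ∂Q‖ ^ 2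
          + ‖(∫ x, Real.sin ⟪s, x⟫ ∂Q) • C s + ∫ x, Real.cos ⟪s, x⟫ • x ∂Q‖ ^ 2) ∂μ := by
        refine integral_congr_ae (Eventually.of_forall fun u => ?_)
        beta_reduce
        exact key_per_u C Q hQ1 u
end

section
/- Finite-dimensional spectral representation of the vectorised Langevin kernel Stein discrepancy: under the stated conditions, ∫_{ℝ^d} ∫_{ℝ^d} h_v(x,y) q(x) q(y) dx dy = ∫_{ℝ^d} ‖ s · q̂(s) − i ∫_{ℝ^d} ∇ log p(x) e^{i⟨s,x⟩} q(x) dx ‖²_{ℂ^d} dμ(s), where q̂(s) = ∫_{ℝ^d} q(x) e^{i⟨s,x⟩} dx. -/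
open MeasureTheory ProbabilityTheory Complex Filter
open scoped RealInnerProductSpace

/-- The vectorised Langevin Stein kernel on `ℝ^d`:
`h_v(x,y) = ∑ᵢ ∂_{xᵢ}∂_{yᵢ}k(x,y) + ⟪∇log p(x), ∇_y k(x,y)⟫ + ⟪∇log p(y), ∇_x k(x,y)⟫
  + k(x,y)⟪∇log p(x), ∇log p(y)⟫`, where `glp = ∇ log p`. -/
noncomputable def langevinHv {d : ℕ}
    (k : EuclideanSpace ℝ (Fin d) → EuclideanSpace ℝ (Fin d) → ℝ)
    (glp : EuclideanSpace ℝ (Fin d) → EuclideanSpace ℝ (Fin d))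
    (x y : EuclideanSpace ℝ (Fin d)) : ℝ :=
  (∑ i : Fin d,
      fderiv ℝ (fun y1 => fderiv ℝ (fun x1 => k x1 y1) x (EuclideanSpace.single i 1)) y
        (EuclideanSpace.single i 1))
  + fderiv ℝ (fun y1 => k x y1) y (glp x)
  + fderiv ℝ (fun x1 => k x1 y) x (glp y)
  + k x y * ⟪glp x, glp y⟫

set_option synthInstance.maxHeartbeats 1000000
set_option maxHeartbeats 2000000
set_option linter.unusedVariables false
set_option linter.unusedSectionVars false

section
namespace LKSD

variable {d : ℕ}
local notation "E" => EuclideanSpace ℝ (Fin d)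

lemma k_eq_cos {μ : Measure (EuclideanSpace ℝ (Fin d))} [IsFiniteMeasure μ]
    (k : E → E → ℝ)
    (hk : ∀ x y, (k x y : ℂ) = ∫ u, Complex.exp ((⟪x - y, u⟫ : ℂ) * Complex.I) ∂μ)
    (x y : E) : k x y = ∫ u, Real.cos ⟪u, x - y⟫ ∂μ := by
  have hi : Integrable (fun u : E => Complex.exp ((⟪x - y, u⟫ : ℂ) * Complex.I)) μ := by
    refine (integrable_const (1:ℝ)).mono' ?_ ?_
    · exact (Complex.continuous_exp.comp
        ((Complex.continuous_ofReal.comp (continuous_const.inner continuous_id)).mul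
          continuous_const)).aestronglyMeasurable
    · filter_upwards with u
      simp only [Complex.norm_exp_ofReal_mul_I, le_refl]
  have h1 := congrArg Complex.re (hk x y)
  have h2 : (∫ u, Complex.exp ((⟪x - y, u⟫ : ℂ) * Complex.I) ∂μ).re
      = ∫ u, (Complex.exp ((⟪x - y, u⟫ : ℂ) * Complex.I)).re ∂μ := by
    rw [← RCLike.re_to_complex, ← integral_re hi]
    simp [RCLike.re_to_complex]
  rw [h2] at h1
  simp only [Complex.exp_ofReal_mul_I_re, Complex.ofReal_re] at h1
  rw [h1]
  congr 1
  ext u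
  rw [real_inner_comm]


lemma int_norm' {μ : Measure (EuclideanSpace ℝ (Fin d))} [IsFiniteMeasure μ]
    (hμ2 : Integrable (fun s : E => ‖s‖ ^ 2) μ) :
    Integrable (fun s : E => ‖s‖) μ := by
  refine ((integrable_const (1:ℝ)).add hμ2).mono' continuous_norm.aestronglyMeasurable ?_
  filter_upwards with s
  have h : ‖s‖ ≤ 1 + ‖s‖ ^ 2 := by nlinarith [norm_nonneg s]
  simpa [_root_.abs_of_nonneg (norm_nonneg s)] using h

lemma hasFDerivAt_cos_inner (u z : E) :
    HasFDerivAt (fun w : E => Real.cos ⟪u, w⟫) ((-Real.sin ⟪u, z⟫) • innerSL ℝ u) z := by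
  simpa [Function.comp_def] using
    (Real.hasDerivAt_cos ⟪u, z⟫).comp_hasFDerivAt z (innerSL ℝ u).hasFDerivAt

lemma hasFDerivAt_sin_inner (u z : E) :
    HasFDerivAt (fun w : E => Real.sin ⟪u, w⟫) ((Real.cos ⟪u, z⟫) • innerSL ℝ u) z := by
  simpa [Function.comp_def] using
    (Real.hasDerivAt_sin ⟪u, z⟫).comp_hasFDerivAt z (innerSL ℝ u).hasFDerivAt

variable {μ : Measure (EuclideanSpace ℝ (Fin d))} [IsFiniteMeasure μ]

lemma integrable_sin_smul_innerSL (hμ2 : Integrable (fun s : E => ‖s‖ ^ 2) μ) (z : E) :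
    Integrable (fun u : E => (-Real.sin ⟪u, z⟫) • innerSL ℝ u) μ := by
  refine (int_norm' hμ2).mono' ?_ ?_
  · exact (((Real.continuous_sin.comp (continuous_id.inner continuous_const)).neg).smul
      (innerSL ℝ).continuous).aestronglyMeasurable
  · filter_upwards with u
    refine le_trans (ContinuousLinearMap.opNorm_smul_le _ _) ?_
    rw [innerSL_apply_norm]
    calc ‖-Real.sin ⟪u, z⟫‖ * ‖u‖ ≤ 1 * ‖u‖ := by
          gcongr
          simpa using Real.abs_sin_le_one ⟪u, z⟫
      _ = ‖u‖ := one_mul _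

lemma integrable_cos_mul_smul_innerSL (hμ2 : Integrable (fun s : E => ‖s‖ ^ 2) μ) (z w : E) :
    Integrable (fun u : E => (Real.cos ⟪u, z⟫ * ⟪u, w⟫) • innerSL ℝ u) μ := by
  refine (hμ2.const_mul ‖w‖).mono' ?_ ?_
  · exact (((Real.continuous_cos.comp (continuous_id.inner continuous_const)).mul
      (continuous_id.inner continuous_const)).smul (innerSL ℝ).continuous).aestronglyMeasurable
  · filter_upwards with u
    refine le_trans (ContinuousLinearMap.opNorm_smul_le _ _) ?_
    rw [innerSL_apply_norm]
    have h1 : ‖Real.cos ⟪u, z⟫ * ⟪u, w⟫‖ ≤ ‖u‖ * ‖w‖ := by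
      rw [norm_mul]
      calc ‖Real.cos ⟪u, z⟫‖ * ‖⟪u, w⟫‖ ≤ 1 * (‖u‖ * ‖w‖) := by
            refine mul_le_mul ?_ ?_ (norm_nonneg _) one_pos.le
            · simpa using Real.abs_cos_le_one ⟪u, z⟫
            · exact norm_inner_le_norm u w
        _ = ‖u‖ * ‖w‖ := one_mul _
    calc ‖Real.cos ⟪u, z⟫ * ⟪u, w⟫‖ * ‖u‖ ≤ (‖u‖ * ‖w‖) * ‖u‖ :=
          mul_le_mul_of_nonneg_right h1 (norm_nonneg _)
      _ = ‖w‖ * ‖u‖ ^ 2 := by ring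

/-- derivative of `z ↦ ∫ cos⟪u,z⟫ dμ`. -/
lemma hasFDerivAt_K (hμ2 : Integrable (fun s : E => ‖s‖ ^ 2) μ) (z : E) :
    HasFDerivAt (fun w : E => ∫ u, Real.cos ⟪u, w⟫ ∂μ)
      (∫ u, (-Real.sin ⟪u, z⟫) • innerSL ℝ u ∂μ) z := by
  refine hasFDerivAt_integral_of_dominated_of_fderiv_le (F := fun w u => Real.cos ⟪u, w⟫)
    (F' := fun w u => (-Real.sin ⟪u, w⟫) • innerSL ℝ u) (bound := fun u => ‖u‖)
    (s := Metric.ball z 1) (Metric.ball_mem_nhds z one_pos) ?_ ?_ ?_ ?_ (int_norm' hμ2) ?_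
  · filter_upwards with w
    exact (Real.continuous_cos.comp (continuous_id.inner continuous_const)).aestronglyMeasurable
  · refine (integrable_const (1:ℝ)).mono'
      (Real.continuous_cos.comp (continuous_id.inner continuous_const)).aestronglyMeasurable ?_
    filter_upwards with u
    simpa using Real.abs_cos_le_one ⟪u, z⟫
  · exact (integrable_sin_smul_innerSL hμ2 z).aestronglyMeasurable
  · filter_upwards with u
    intro w _
    refine le_trans (ContinuousLinearMap.opNorm_smul_le _ _) ?_
    rw [innerSL_apply_norm]
    calc ‖-Real.sin ⟪u, w⟫‖ * ‖u‖ ≤ 1 * ‖u‖ := by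
          gcongr
          simpa using Real.abs_sin_le_one ⟪u, w⟫
      _ = ‖u‖ := one_mul _
  · filter_upwards with u
    intro w _
    exact hasFDerivAt_cos_inner u w

/-- derivative of `z ↦ ∫ sin⟪u,z⟫⟪u,w⟫ dμ`. -/
lemma hasFDerivAt_Theta (hμ2 : Integrable (fun s : E => ‖s‖ ^ 2) μ) (w z : E) :
    HasFDerivAt (fun z1 : E => ∫ u, Real.sin ⟪u, z1⟫ * ⟪u, w⟫ ∂μ)
      (∫ u, (Real.cos ⟪u, z⟫ * ⟪u, w⟫) • innerSL ℝ u ∂μ) z := by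
  refine hasFDerivAt_integral_of_dominated_of_fderiv_le
    (F := fun z1 u => Real.sin ⟪u, z1⟫ * ⟪u, w⟫)
    (F' := fun z1 u => (Real.cos ⟪u, z1⟫ * ⟪u, w⟫) • innerSL ℝ u)
    (bound := fun u => ‖w‖ * ‖u‖ ^ 2) (s := Metric.ball z 1) (Metric.ball_mem_nhds z one_pos) ?_ ?_ ?_ ?_ (hμ2.const_mul ‖w‖) ?_
  · filter_upwards with z1
    exact ((Real.continuous_sin.comp (continuous_id.inner continuous_const)).mul
      (continuous_id.inner continuous_const)).aestronglyMeasurable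
  · refine ((int_norm' hμ2).const_mul ‖w‖).mono'
      ((Real.continuous_sin.comp (continuous_id.inner continuous_const)).mul
        (continuous_id.inner continuous_const)).aestronglyMeasurable ?_
    filter_upwards with u
    rw [norm_mul]
    calc ‖Real.sin ⟪u, z⟫‖ * ‖⟪u, w⟫‖ ≤ 1 * (‖u‖ * ‖w‖) := by
          refine mul_le_mul ?_ (norm_inner_le_norm u w) (norm_nonneg _) one_pos.le
          simpa using Real.abs_sin_le_one ⟪u, z⟫
      _ = ‖w‖ * ‖u‖ := by ring
  · exact (integrable_cos_mul_smul_innerSL hμ2 z w).aestronglyMeasurable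
  · filter_upwards with u
    intro z1 _
    refine le_trans (ContinuousLinearMap.opNorm_smul_le _ _) ?_
    rw [innerSL_apply_norm, norm_mul]
    calc ‖Real.cos ⟪u, z1⟫‖ * ‖⟪u, w⟫‖ * ‖u‖ ≤ 1 * (‖u‖ * ‖w‖) * ‖u‖ := by
          refine mul_le_mul_of_nonneg_right ?_ (norm_nonneg _)
          refine mul_le_mul ?_ (norm_inner_le_norm u w) (norm_nonneg _) one_pos.le
          simpa using Real.abs_cos_le_one ⟪u, z1⟫
      _ = ‖w‖ * ‖u‖ ^ 2 := by ring
  · filter_upwards with u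
    intro z1 _
    have h := (hasFDerivAt_sin_inner u z1).mul_const ⟪u, w⟫
    rw [smul_smul, mul_comm] at h
    exact h


lemma intg_trig_mul (hμ2 : Integrable (fun s : E => ‖s‖ ^ 2) μ)
    (f : ℝ → ℝ) (hf : Continuous f) (hfb : ∀ t, ‖f t‖ ≤ 1) (z w : E) :
    Integrable (fun u : E => f ⟪u, z⟫ * ⟪u, w⟫) μ := by
  have h0 : Integrable (fun s : E => ‖w‖ * ‖s‖) μ := by
    refine (((integrable_const (1:ℝ)).add hμ2).const_mul ‖w‖).mono'
      (continuous_const.mul continuous_norm).aestronglyMeasurable ?_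
    filter_upwards with s
    have h : ‖s‖ ≤ 1 + ‖s‖ ^ 2 := by nlinarith [norm_nonneg s]
    calc ‖‖w‖ * ‖s‖‖ = ‖w‖ * ‖s‖ := by rw [norm_mul, norm_norm, norm_norm]
      _ ≤ ‖w‖ * (1 + ‖s‖ ^ 2) := mul_le_mul_of_nonneg_left h (norm_nonneg w)
  refine h0.mono' ((hf.comp (continuous_id.inner continuous_const)).mul
    (continuous_id.inner continuous_const)).aestronglyMeasurable ?_
  filter_upwards with u
  rw [norm_mul]
  calc ‖f ⟪u, z⟫‖ * ‖⟪u, w⟫‖ ≤ 1 * (‖u‖ * ‖w‖) :=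
        mul_le_mul (hfb _) (norm_inner_le_norm u w) (norm_nonneg _) one_pos.le
    _ = ‖w‖ * ‖u‖ := by ring

lemma intg_cos_mul_const (hμ2 : Integrable (fun s : E => ‖s‖ ^ 2) μ) (z : E) (c : ℝ) :
    Integrable (fun u : E => Real.cos ⟪u, z⟫ * c) μ := by
  refine Integrable.mul_const ?_ c
  refine (integrable_const (1:ℝ)).mono'
    (Real.continuous_cos.comp (continuous_id.inner continuous_const)).aestronglyMeasurable ?_
  filter_upwards with u
  simpa using Real.abs_cos_le_one ⟪u, z⟫

lemma intg_cos_norm2 (hμ2 : Integrable (fun s : E => ‖s‖ ^ 2) μ) (z : E) :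
    Integrable (fun u : E => Real.cos ⟪u, z⟫ * ‖u‖ ^ 2) μ := by
  refine hμ2.mono' (((Real.continuous_cos.comp (continuous_id.inner continuous_const)).mul
    (continuous_norm.pow 2))).aestronglyMeasurable ?_
  filter_upwards with u
  rw [norm_mul]
  calc ‖Real.cos ⟪u, z⟫‖ * ‖‖u‖ ^ 2‖ ≤ 1 * ‖u‖ ^ 2 := by
        rw [norm_pow, norm_norm]
        exact mul_le_mul_of_nonneg_right (by simpa using Real.abs_cos_le_one ⟪u, z⟫)
          (by positivity)
    _ = ‖u‖ ^ 2 := one_mul _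


lemma glp_measurable (p : EuclideanSpace ℝ (Fin d) → ℝ)
    (glp : EuclideanSpace ℝ (Fin d) → EuclideanSpace ℝ (Fin d))
    (hglp : ∀ x, HasGradientAt (fun y => Real.log (p y)) (glp x) x) :
    Measurable glp := by
  have h1 : glp = fun x =>
      (InnerProductSpace.toDual ℝ (EuclideanSpace ℝ (Fin d))).symm
        (fderiv ℝ (fun y => Real.log (p y)) x) := by
    funext x
    rw [((hglp x).hasFDerivAt).fderiv]
    simp
  rw [h1]
  exact ((InnerProductSpace.toDual ℝ (EuclideanSpace ℝ (Fin d))).symm.continuous.measurable).comp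
    (measurable_fderiv ℝ _)

variable (q : EuclideanSpace ℝ (Fin d) → ℝ) (glp : EuclideanSpace ℝ (Fin d) → EuclideanSpace ℝ (Fin d))

lemma hqg (hq0 : ∀ x, 0 ≤ q x) (hqint : Integrable q volume)
    (hmom : Integrable (fun x => ‖glp x‖ ^ 2 * q x) volume) (hglpm : Measurable glp) :
    Integrable (fun x : E => q x * ‖glp x‖) volume := by
  refine (hqint.add hmom).mono' (hqint.1.mul hglpm.norm.aestronglyMeasurable) ?_
  filter_upwards with x
  have h1 : ‖glp x‖ ≤ 1 + ‖glp x‖ ^ 2 := by nlinarith [norm_nonneg (glp x)]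
  have h2 : 0 ≤ q x * ‖glp x‖ := mul_nonneg (hq0 x) (norm_nonneg _)
  rw [Real.norm_eq_abs, _root_.abs_of_nonneg h2]
  simp only [Pi.add_apply]
  nlinarith [hq0 x, norm_nonneg (glp x)]

lemma iqtrig (hqint : Integrable q volume) (f : ℝ → ℝ) (hf : Continuous f)
    (hfb : ∀ t, |f t| ≤ 1) (s : E) :
    Integrable (fun x : E => q x * f ⟪s, x⟫) volume := by
  refine hqint.abs.mono' (hqint.1.mul
    (hf.comp (continuous_const.inner continuous_id)).aestronglyMeasurable) ?_
  filter_upwards with x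
  rw [Real.norm_eq_abs, abs_mul]
  calc |q x| * |f ⟪s, x⟫| ≤ |q x| * 1 := by
        exact mul_le_mul_of_nonneg_left (hfb _) (abs_nonneg _)
    _ = |q x| := mul_one _

lemma iqtrigg (hq0 : ∀ x, 0 ≤ q x) (hqint : Integrable q volume)
    (hmom : Integrable (fun x => ‖glp x‖ ^ 2 * q x) volume) (hglpm : Measurable glp)
    (f : ℝ → ℝ) (hf : Continuous f) (hfb : ∀ t, |f t| ≤ 1) (s : E) :
    Integrable (fun x : E => (q x * f ⟪s, x⟫) • glp x) volume := by
  refine (hqg q glp hq0 hqint hmom hglpm).mono'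
    ((hqint.1.mul (hf.comp (continuous_const.inner continuous_id)).aestronglyMeasurable).smul
      hglpm.aestronglyMeasurable) ?_
  filter_upwards with x
  rw [norm_smul, Real.norm_eq_abs, abs_mul]
  calc |q x| * |f ⟪s, x⟫| * ‖glp x‖ ≤ |q x| * 1 * ‖glp x‖ := by
        refine mul_le_mul_of_nonneg_right (mul_le_mul_of_nonneg_left (hfb _) (abs_nonneg _))
          (norm_nonneg _)
    _ = q x * ‖glp x‖ := by rw [mul_one, _root_.abs_of_nonneg (hq0 x)]

lemma trig_int_abs_le (hq0 : ∀ x, 0 ≤ q x) (hqint : Integrable q volume)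
    (hq1 : ∫ x, q x = 1) (f : ℝ → ℝ) (hf : Continuous f) (hfb : ∀ t, |f t| ≤ 1) (s : E) :
    |∫ x, q x * f ⟪s, x⟫| ≤ 1 := by
  have h := norm_integral_le_integral_norm (μ := volume) (fun x : E => q x * f ⟪s, x⟫)
  rw [Real.norm_eq_abs] at h
  refine h.trans ?_
  rw [← hq1]
  refine integral_mono (iqtrig q hqint f hf hfb s).norm hqint ?_
  intro x
  show ‖q x * f ⟪s, x⟫‖ ≤ q x
  rw [Real.norm_eq_abs, abs_mul]
  calc |q x| * |f ⟪s, x⟫| ≤ |q x| * 1 := mul_le_mul_of_nonneg_left (hfb _) (abs_nonneg _)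
    _ = q x := by rw [mul_one, _root_.abs_of_nonneg (hq0 x)]

lemma trigg_int_norm_le (hq0 : ∀ x, 0 ≤ q x) (hqint : Integrable q volume)
    (hmom : Integrable (fun x => ‖glp x‖ ^ 2 * q x) volume) (hglpm : Measurable glp)
    (f : ℝ → ℝ) (hf : Continuous f) (hfb : ∀ t, |f t| ≤ 1) (s : E) :
    ‖∫ x, (q x * f ⟪s, x⟫) • glp x‖ ≤ ∫ x, q x * ‖glp x‖ := by
  refine (norm_integral_le_integral_norm _).trans ?_
  refine integral_mono (iqtrigg q glp hq0 hqint hmom hglpm f hf hfb s).norm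
    (hqg q glp hq0 hqint hmom hglpm) ?_
  intro x
  show ‖(q x * f ⟪s, x⟫) • glp x‖ ≤ q x * ‖glp x‖
  rw [norm_smul, Real.norm_eq_abs, abs_mul]
  calc |q x| * |f ⟪s, x⟫| * ‖glp x‖ ≤ |q x| * 1 * ‖glp x‖ :=
        mul_le_mul_of_nonneg_right (mul_le_mul_of_nonneg_left (hfb _) (abs_nonneg _))
          (norm_nonneg _)
    _ = q x * ‖glp x‖ := by rw [mul_one, _root_.abs_of_nonneg (hq0 x)]

lemma cont_trig_int (hqint : Integrable q volume) (f : ℝ → ℝ) (hf : Continuous f)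
    (hfb : ∀ t, |f t| ≤ 1) :
    Continuous fun s : E => ∫ x, q x * f ⟪s, x⟫ := by
  refine continuous_of_dominated (bound := fun x => |q x|) ?_ ?_ hqint.abs ?_
  · intro s
    exact hqint.1.mul (hf.comp (continuous_const.inner continuous_id)).aestronglyMeasurable
  · intro s
    filter_upwards with x
    rw [Real.norm_eq_abs, abs_mul]
    calc |q x| * |f ⟪s, x⟫| ≤ |q x| * 1 := mul_le_mul_of_nonneg_left (hfb _) (abs_nonneg _)
      _ = |q x| := mul_one _
  · filter_upwards with x
    exact continuous_const.mul (hf.comp (continuous_id.inner continuous_const))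

lemma cont_trigg_int (hq0 : ∀ x, 0 ≤ q x) (hqint : Integrable q volume)
    (hmom : Integrable (fun x => ‖glp x‖ ^ 2 * q x) volume) (hglpm : Measurable glp)
    (f : ℝ → ℝ) (hf : Continuous f) (hfb : ∀ t, |f t| ≤ 1) :
    Continuous fun s : E => ∫ x, (q x * f ⟪s, x⟫) • glp x := by
  refine continuous_of_dominated (bound := fun x => q x * ‖glp x‖) ?_ ?_
    (hqg q glp hq0 hqint hmom hglpm) ?_
  · intro s
    exact (hqint.1.mul (hf.comp (continuous_const.inner continuous_id)).aestronglyMeasurable).smul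
      hglpm.aestronglyMeasurable
  · intro s
    filter_upwards with x
    rw [norm_smul, Real.norm_eq_abs, abs_mul]
    calc |q x| * |f ⟪s, x⟫| * ‖glp x‖ ≤ |q x| * 1 * ‖glp x‖ :=
          mul_le_mul_of_nonneg_right (mul_le_mul_of_nonneg_left (hfb _) (abs_nonneg _))
            (norm_nonneg _)
      _ = q x * ‖glp x‖ := by rw [mul_one, _root_.abs_of_nonneg (hq0 x)]
  · filter_upwards with x
    exact (continuous_const.mul (hf.comp (continuous_id.inner continuous_const))).smul
      continuous_const

lemma int_combo (f g : EuclideanSpace ℝ (Fin d) → ℝ) (h : EuclideanSpace ℝ (Fin d) → EuclideanSpace ℝ (Fin d))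
    (hf : Integrable f volume) (hg : Integrable g volume)
    (hfh : Integrable (fun x => f x • h x) volume) (hgh : Integrable (fun x => g x • h x) volume)
    (a b : ℝ) (v w : EuclideanSpace ℝ (Fin d)) :
    ∫ x, (f x * a + g x * b + ⟪v, f x • h x⟫ + ⟪w, g x • h x⟫)
      = (∫ x, f x) * a + (∫ x, g x) * b
        + ⟪v, ∫ x, f x • h x⟫ + ⟪w, ∫ x, g x • h x⟫ := by
  have i1 := hf.mul_const a
  have i2 := hg.mul_const b
  have i3 := hfh.const_inner (𝕜 := ℝ) v
  have i4 := hgh.const_inner (𝕜 := ℝ) w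
  have i12 : Integrable (fun x => f x * a + g x * b) volume := i1.add i2
  have i123 : Integrable (fun x => f x * a + g x * b + ⟪v, f x • h x⟫) volume := i12.add i3
  rw [integral_add i123 i4, integral_add i12 i3, integral_add i1 i2,
    integral_mul_const, integral_mul_const, integral_inner hfh, integral_inner hgh]


-- pointwise bound on the Stein integrand
lemma abs_G_le (glp : E → E) (x y u : E) :
    |Real.cos ⟪u, x - y⟫ * (‖u‖ ^ 2 + ⟪glp x, glp y⟫)
        + Real.sin ⟪u, x - y⟫ * (⟪u, glp x⟫ - ⟪u, glp y⟫)|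
      ≤ 2 * (1 + ‖glp x‖) * (1 + ‖glp y‖) * (1 + ‖u‖ ^ 2) := by
  have hc := Real.abs_cos_le_one ⟪u, x - y⟫
  have hs := Real.abs_sin_le_one ⟪u, x - y⟫
  have h1 := abs_real_inner_le_norm (glp x) (glp y)
  have h2 := abs_real_inner_le_norm u (glp x)
  have h3 := abs_real_inner_le_norm u (glp y)
  have ha := norm_nonneg (glp x)
  have hb := norm_nonneg (glp y)
  have ht := norm_nonneg u
  have key : |Real.cos ⟪u, x - y⟫ * (‖u‖ ^ 2 + ⟪glp x, glp y⟫)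
      + Real.sin ⟪u, x - y⟫ * (⟪u, glp x⟫ - ⟪u, glp y⟫)|
      ≤ (‖u‖ ^ 2 + ‖glp x‖ * ‖glp y‖) + (‖u‖ * ‖glp x‖ + ‖u‖ * ‖glp y‖) := by
    refine (abs_add_le _ _).trans ?_
    rw [abs_mul, abs_mul]
    have b1 : |‖u‖ ^ 2 + ⟪glp x, glp y⟫| ≤ ‖u‖ ^ 2 + ‖glp x‖ * ‖glp y‖ := by
      refine (abs_add_le _ _).trans ?_
      rw [_root_.abs_pow, abs_norm]
      linarith
    have b2 : |⟪u, glp x⟫ - ⟪u, glp y⟫| ≤ ‖u‖ * ‖glp x‖ + ‖u‖ * ‖glp y‖ := by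
      refine (abs_sub _ _).trans (by linarith)
    nlinarith [abs_nonneg (Real.cos ⟪u, x - y⟫), abs_nonneg (Real.sin ⟪u, x - y⟫),
      abs_nonneg (‖u‖ ^ 2 + ⟪glp x, glp y⟫ : ℝ), abs_nonneg (⟪u, glp x⟫ - ⟪u, glp y⟫ : ℝ)]
  refine key.trans ?_
  nlinarith [sq_nonneg (‖u‖ - 1), mul_nonneg ha hb, mul_nonneg (mul_nonneg ha hb) (sq_nonneg ‖u‖),
    mul_nonneg ha (sq_nonneg ‖u‖), mul_nonneg hb (sq_nonneg ‖u‖),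
    mul_nonneg ha (sq_nonneg (‖u‖ - 1)), mul_nonneg hb (sq_nonneg (‖u‖ - 1))]

variable (k : EuclideanSpace ℝ (Fin d) → EuclideanSpace ℝ (Fin d) → ℝ)
  (hk : ∀ x y : EuclideanSpace ℝ (Fin d),
    (k x y : ℂ) = ∫ u, Complex.exp ((⟪x - y, u⟫ : ℂ) * Complex.I) ∂μ)
  (hμ2 : Integrable (fun s : EuclideanSpace ℝ (Fin d) => ‖s‖ ^ 2) μ)

include hk hμ2

lemma fderiv_k_x (x y v : E) :
    fderiv ℝ (fun x1 => k x1 y) x v = ∫ u, -(Real.sin ⟪u, x - y⟫ * ⟪u, v⟫) ∂μ := by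
  have hfun : (fun x1 => k x1 y) = fun x1 => ∫ u, Real.cos ⟪u, x1 - y⟫ ∂μ := by
    funext x1; exact k_eq_cos k hk x1 y
  have hd : HasFDerivAt (fun x1 => ∫ u, Real.cos ⟪u, x1 - y⟫ ∂μ)
      (∫ u, (-Real.sin ⟪u, x - y⟫) • innerSL ℝ u ∂μ) x := by
    have h := (hasFDerivAt_K hμ2 (x - y)).comp x ((hasFDerivAt_id x).sub_const y)
    simpa [Function.comp_def] using h
  rw [hfun, hd.fderiv, ContinuousLinearMap.integral_apply (integrable_sin_smul_innerSL hμ2 _)]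
  congr 1; ext u
  simp [neg_mul]

lemma fderiv_k_y (x y v : E) :
    fderiv ℝ (fun y1 => k x y1) y v = ∫ u, Real.sin ⟪u, x - y⟫ * ⟪u, v⟫ ∂μ := by
  have hfun : (fun y1 => k x y1) = fun y1 => ∫ u, Real.cos ⟪u, x - y1⟫ ∂μ := by
    funext y1; exact k_eq_cos k hk x y1
  have hd : HasFDerivAt (fun y1 => ∫ u, Real.cos ⟪u, x - y1⟫ ∂μ)
      (-(∫ u, (-Real.sin ⟪u, x - y⟫) • innerSL ℝ u ∂μ)) y := by
    have h := (hasFDerivAt_K hμ2 (x - y)).comp y ((hasFDerivAt_id y).const_sub x)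
    simpa [Function.comp_def] using h
  rw [hfun, hd.fderiv]
  rw [ContinuousLinearMap.neg_apply,
    ContinuousLinearMap.integral_apply (integrable_sin_smul_innerSL hμ2 _)]
  rw [← integral_neg]
  congr 1; ext u
  simp [neg_mul]

lemma fderiv_k_xy (x y w w' : E) :
    fderiv ℝ (fun y1 => fderiv ℝ (fun x1 => k x1 y1) x w) y w'
      = ∫ u, Real.cos ⟪u, x - y⟫ * ⟪u, w⟫ * ⟪u, w'⟫ ∂μ := by
  have hfun : (fun y1 => fderiv ℝ (fun x1 => k x1 y1) x w)
      = fun y1 => -∫ u, Real.sin ⟪u, x - y1⟫ * ⟪u, w⟫ ∂μ := by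
    funext y1
    rw [fderiv_k_x k hk hμ2 x y1 w, integral_neg]
  have hd : HasFDerivAt (fun y1 => -∫ u, Real.sin ⟪u, x - y1⟫ * ⟪u, w⟫ ∂μ)
      (∫ u, (Real.cos ⟪u, x - y⟫ * ⟪u, w⟫) • innerSL ℝ u ∂μ) y := by
    have h := (((hasFDerivAt_Theta hμ2 w (x - y)).comp y
      ((hasFDerivAt_id y).const_sub x))).neg
    simpa [Function.comp_def, Pi.neg_def] using h
  rw [hfun, hd.fderiv,
    ContinuousLinearMap.integral_apply (integrable_cos_mul_smul_innerSL hμ2 _ _)]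
  congr 1


lemma langevinHv_eq (glp : E → E) (x y : E) :
    langevinHv k glp x y
      = ∫ u, (Real.cos ⟪u, x - y⟫ * (‖u‖ ^ 2 + ⟪glp x, glp y⟫)
          + Real.sin ⟪u, x - y⟫ * (⟪u, glp x⟫ - ⟪u, glp y⟫)) ∂μ := by
  have habs_sin : ∀ t : ℝ, ‖Real.sin t‖ ≤ 1 := fun t => by simpa using Real.abs_sin_le_one t
  have habs_cos : ∀ t : ℝ, ‖Real.cos t‖ ≤ 1 := fun t => by simpa using Real.abs_cos_le_one t
  have hsum : (∑ i : Fin d,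
      fderiv ℝ (fun y1 => fderiv ℝ (fun x1 => k x1 y1) x (EuclideanSpace.single i 1)) y
        (EuclideanSpace.single i 1))
      = ∫ u, Real.cos ⟪u, x - y⟫ * ‖u‖ ^ 2 ∂μ := by
    have h1 : ∀ i : Fin d,
        fderiv ℝ (fun y1 => fderiv ℝ (fun x1 => k x1 y1) x (EuclideanSpace.single i 1)) y
          (EuclideanSpace.single i 1)
        = ∫ u, Real.cos ⟪u, x - y⟫ * ⟪u, EuclideanSpace.single i 1⟫
            * ⟪u, EuclideanSpace.single i 1⟫ ∂μ := fun i =>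
      fderiv_k_xy k hk hμ2 x y _ _
    rw [Finset.sum_congr rfl fun i _ => h1 i, ← integral_finset_sum]
    · congr 1; funext u
      have hs : ∀ i : Fin d, ⟪u, EuclideanSpace.single i (1:ℝ)⟫ = u i := by
        intro i
        simp [EuclideanSpace.inner_single_right]
      simp_rw [hs, mul_assoc]
      rw [← Finset.mul_sum]
      congr 1
      rw [← real_inner_self_eq_norm_sq, PiLp.inner_apply]
      simp [RCLike.inner_apply, sq]
    · intro i _
      have h1 : ‖EuclideanSpace.single i (1:ℝ)‖ = 1 := by
        simp [EuclideanSpace.norm_single]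
      refine hμ2.mono' ?_ ?_
      · exact (((Real.continuous_cos.comp (continuous_id.inner continuous_const)).mul
          (continuous_id.inner continuous_const)).mul
          (continuous_id.inner continuous_const)).aestronglyMeasurable
      · filter_upwards with u
        have e1 : |⟪u, EuclideanSpace.single i (1:ℝ)⟫| ≤ ‖u‖ := by
          have := norm_inner_le_norm (𝕜 := ℝ) u (EuclideanSpace.single i (1:ℝ))
          rwa [h1, mul_one] at this
        have e2 := habs_cos ⟪u, x - y⟫
        rw [Real.norm_eq_abs] at e2 ⊢
        rw [abs_mul, abs_mul]
        have h3 := abs_nonneg (Real.cos ⟪u, x - y⟫)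
        have h4 := abs_nonneg (⟪u, EuclideanSpace.single i (1:ℝ)⟫ : ℝ)
        have h5 := norm_nonneg u
        have e3 : |(⟪u, EuclideanSpace.single i (1:ℝ)⟫ : ℝ)| * |(⟪u, EuclideanSpace.single i (1:ℝ)⟫ : ℝ)| ≤ ‖u‖ * ‖u‖ :=
          mul_le_mul e1 e1 h4 h5
        nlinarith [mul_le_mul e2 e3 (mul_nonneg h4 h4) zero_le_one]
  rw [langevinHv, hsum, fderiv_k_y k hk hμ2 x y (glp x), fderiv_k_x k hk hμ2 x y (glp y),
    k_eq_cos k hk x y]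
  have i1 : Integrable (fun u : E => Real.cos ⟪u, x - y⟫ * ‖u‖ ^ 2) μ :=
    intg_cos_norm2 hμ2 _
  have i2 : Integrable (fun u : E => Real.sin ⟪u, x - y⟫ * ⟪u, glp x⟫) μ :=
    intg_trig_mul hμ2 Real.sin Real.continuous_sin habs_sin _ _
  have i3 : Integrable (fun u : E => -(Real.sin ⟪u, x - y⟫ * ⟪u, glp y⟫)) μ :=
    (intg_trig_mul hμ2 Real.sin Real.continuous_sin habs_sin _ _).neg
  have i4 : Integrable (fun u : E => Real.cos ⟪u, x - y⟫ * ⟪glp x, glp y⟫) μ :=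
    intg_cos_mul_const hμ2 _ _
  have i12 : Integrable (fun u : E => Real.cos ⟪u, x - y⟫ * ‖u‖ ^ 2
      + Real.sin ⟪u, x - y⟫ * ⟪u, glp x⟫) μ := i1.add i2
  have i123 : Integrable (fun u : E => (Real.cos ⟪u, x - y⟫ * ‖u‖ ^ 2
      + Real.sin ⟪u, x - y⟫ * ⟪u, glp x⟫) + -(Real.sin ⟪u, x - y⟫ * ⟪u, glp y⟫)) μ := i12.add i3
  rw [← integral_mul_const, ← integral_add i1 i2, ← integral_add i12 i3,
    ← integral_add i123 i4]
  congr 1; funext u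
  ring


end LKSD

open LKSD in
/-- **Finite-dimensional spectral representation of the vectorised Langevin kernel Stein
discrepancy**: the element `s q̂(s) − i ∫ ∇log p(x) e^{i⟪s,x⟫} q(x) dx` of `ℂ^d` has real
part `(∫ q cos⟪s,x⟫) • s + ∫ (q sin⟪s,x⟫) • ∇log p` and imaginary part
`(∫ q sin⟪s,x⟫) • s − ∫ (q cos⟪s,x⟫) • ∇log p`, and its squared `ℂ^d`-norm is the sum of
the squared norms of these two parts. -/
theorem langevin_ksd_spectral_representation {d : ℕ}
    (p : EuclideanSpace ℝ (Fin d) → ℝ) (hp : ∀ x, 0 < p x)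
    (hpd : Differentiable ℝ p)
    (glp : EuclideanSpace ℝ (Fin d) → EuclideanSpace ℝ (Fin d))
    (hglp : ∀ x, HasGradientAt (fun y => Real.log (p y)) (glp x) x)
    (q : EuclideanSpace ℝ (Fin d) → ℝ) (hq0 : ∀ x, 0 ≤ q x)
    (hqint : Integrable q volume) (hq1 : ∫ x, q x = 1)
    (hmom : Integrable (fun x => ‖glp x‖ ^ 2 * q x) volume)
    (μ : Measure (EuclideanSpace ℝ (Fin d))) [IsFiniteMeasure μ]
    (hμsymm : Measure.map (fun u => -u) μ = μ)
    (hμ2 : Integrable (fun s => ‖s‖ ^ 2) μ)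
    (k : EuclideanSpace ℝ (Fin d) → EuclideanSpace ℝ (Fin d) → ℝ)
    (hk : ∀ x y, (k x y : ℂ) = ∫ u, Complex.exp ((⟪x - y, u⟫ : ℂ) * Complex.I) ∂μ) :
    ∫ x, ∫ y, langevinHv k glp x y * q x * q y
      = ∫ s,
          (‖(∫ x, q x * Real.cos ⟪s, x⟫) • s + ∫ x, (q x * Real.sin ⟪s, x⟫) • glp x‖ ^ 2
          + ‖(∫ x, q x * Real.sin ⟪s, x⟫) • s - ∫ x, (q x * Real.cos ⟪s, x⟫) • glp x‖ ^ 2)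
        ∂μ := by
  classical
  have hglpm : Measurable glp := glp_measurable p glp hglp
  have hcos1 : ∀ t : ℝ, |Real.cos t| ≤ 1 := Real.abs_cos_le_one
  have hsin1 : ∀ t : ℝ, |Real.sin t| ≤ 1 := Real.abs_sin_le_one
  set A : EuclideanSpace ℝ (Fin d) → ℝ := fun s => ∫ x, q x * Real.cos ⟪s, x⟫ with hA_def
  set B : EuclideanSpace ℝ (Fin d) → ℝ := fun s => ∫ x, q x * Real.sin ⟪s, x⟫ with hB_def
  set C : EuclideanSpace ℝ (Fin d) → EuclideanSpace ℝ (Fin d) :=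
    fun s => ∫ x, (q x * Real.cos ⟪s, x⟫) • glp x with hC_def
  set S : EuclideanSpace ℝ (Fin d) → EuclideanSpace ℝ (Fin d) :=
    fun s => ∫ x, (q x * Real.sin ⟪s, x⟫) • glp x with hS_def
  have iqg : Integrable (fun x : (EuclideanSpace ℝ (Fin d)) => q x * ‖glp x‖) volume := hqg q glp hq0 hqint hmom hglpm
  set M : ℝ := ∫ x, q x * ‖glp x‖ with hM_def
  have hM0 : 0 ≤ M := integral_nonneg fun x => mul_nonneg (hq0 x) (norm_nonneg _)
  have hAb : ∀ s, |A s| ≤ 1 := fun s =>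
    trig_int_abs_le q hq0 hqint hq1 Real.cos Real.continuous_cos hcos1 s
  have hBb : ∀ s, |B s| ≤ 1 := fun s =>
    trig_int_abs_le q hq0 hqint hq1 Real.sin Real.continuous_sin hsin1 s
  have hCb : ∀ s, ‖C s‖ ≤ M := fun s =>
    trigg_int_norm_le q glp hq0 hqint hmom hglpm Real.cos Real.continuous_cos hcos1 s
  have hSb : ∀ s, ‖S s‖ ≤ M := fun s =>
    trigg_int_norm_le q glp hq0 hqint hmom hglpm Real.sin Real.continuous_sin hsin1 s
  have iqc : ∀ s, Integrable (fun x : (EuclideanSpace ℝ (Fin d)) => q x * Real.cos ⟪s, x⟫) volume := fun s =>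
    iqtrig q hqint Real.cos Real.continuous_cos hcos1 s
  have iqs : ∀ s, Integrable (fun x : (EuclideanSpace ℝ (Fin d)) => q x * Real.sin ⟪s, x⟫) volume := fun s =>
    iqtrig q hqint Real.sin Real.continuous_sin hsin1 s
  have iqcg : ∀ s, Integrable (fun x : (EuclideanSpace ℝ (Fin d)) => (q x * Real.cos ⟪s, x⟫) • glp x) volume := fun s =>
    iqtrigg q glp hq0 hqint hmom hglpm Real.cos Real.continuous_cos hcos1 s
  have iqsg : ∀ s, Integrable (fun x : (EuclideanSpace ℝ (Fin d)) => (q x * Real.sin ⟪s, x⟫) • glp x) volume := fun s =>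
    iqtrigg q glp hq0 hqint hmom hglpm Real.sin Real.continuous_sin hsin1 s
  have cA : Continuous A := cont_trig_int q hqint Real.cos Real.continuous_cos hcos1
  have cB : Continuous B := cont_trig_int q hqint Real.sin Real.continuous_sin hsin1
  have cC : Continuous C :=
    cont_trigg_int q glp hq0 hqint hmom hglpm Real.cos Real.continuous_cos hcos1
  have cS : Continuous S :=
    cont_trigg_int q glp hq0 hqint hmom hglpm Real.sin Real.continuous_sin hsin1
  set G : EuclideanSpace ℝ (Fin d) → EuclideanSpace ℝ (Fin d) → EuclideanSpace ℝ (Fin d) → ℝ :=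
    fun x y u => Real.cos ⟪u, x - y⟫ * (‖u‖ ^ 2 + ⟪glp x, glp y⟫)
      + Real.sin ⟪u, x - y⟫ * (⟪u, glp x⟫ - ⟪u, glp y⟫) with hG_def
  set H : EuclideanSpace ℝ (Fin d) → EuclideanSpace ℝ (Fin d) → ℝ := fun x u =>
    (q x * Real.cos ⟪u, x⟫) * (A u * ‖u‖ ^ 2 + ⟪u, S u⟫)
    + (q x * Real.sin ⟪u, x⟫) * (B u * ‖u‖ ^ 2 - ⟪u, C u⟫)
    + ⟪C u - B u • u, (q x * Real.cos ⟪u, x⟫) • glp x⟫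
    + ⟪S u + A u • u, (q x * Real.sin ⟪u, x⟫) • glp x⟫ with hH_def
  -- the inner y-integral
  have hy : ∀ x u : (EuclideanSpace ℝ (Fin d)), (∫ y, G x y u * q x * q y) = H x u := by
    intro x u
    have step1 : (∫ y, G x y u * q x * q y)
        = ∫ y, ((q y * Real.cos ⟪u, y⟫)
              * (q x * (Real.cos ⟪u, x⟫ * ‖u‖ ^ 2 + Real.sin ⟪u, x⟫ * ⟪u, glp x⟫))
            + (q y * Real.sin ⟪u, y⟫)
              * (q x * (Real.sin ⟪u, x⟫ * ‖u‖ ^ 2 - Real.cos ⟪u, x⟫ * ⟪u, glp x⟫))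
            + ⟪q x • (Real.cos ⟪u, x⟫ • glp x - Real.sin ⟪u, x⟫ • u),
                (q y * Real.cos ⟪u, y⟫) • glp y⟫
            + ⟪q x • (Real.sin ⟪u, x⟫ • glp x + Real.cos ⟪u, x⟫ • u),
                (q y * Real.sin ⟪u, y⟫) • glp y⟫) := by
      refine integral_congr_ae (Filter.Eventually.of_forall fun y => ?_)
      simp only [hG_def, inner_sub_right, Real.cos_sub, Real.sin_sub, inner_sub_left,
        inner_add_left, real_inner_smul_left, real_inner_smul_right]
      ring
    rw [step1, int_combo (fun y : (EuclideanSpace ℝ (Fin d)) => q y * Real.cos ⟪u, y⟫)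
      (fun y : (EuclideanSpace ℝ (Fin d)) => q y * Real.sin ⟪u, y⟫) glp (iqc u) (iqs u) (iqcg u) (iqsg u)]
    simp only [hH_def, inner_sub_left, inner_add_left, real_inner_smul_left,
      real_inner_smul_right, inner_sub_right, inner_add_right]
    rw [real_inner_comm (glp x) (C u), real_inner_comm (glp x) (S u)]
    ring
  -- integrability for the first swap
  have qg_int : Integrable (fun y : (EuclideanSpace ℝ (Fin d)) => q y * (1 + ‖glp y‖)) volume := by
    have : (fun y : (EuclideanSpace ℝ (Fin d)) => q y * (1 + ‖glp y‖)) = fun y => q y + q y * ‖glp y‖ := by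
      funext y; ring
    rw [this]; exact hqint.add iqg
  have mu_int : Integrable (fun u : (EuclideanSpace ℝ (Fin d)) => 1 + ‖u‖ ^ 2) μ := (integrable_const (1:ℝ)).add hμ2
  have swap1 : ∀ x : (EuclideanSpace ℝ (Fin d)),
      (∫ y, ∫ u, G x y u * q x * q y ∂μ) = ∫ u, (∫ y, G x y u * q x * q y) ∂μ := by
    intro x
    refine integral_integral_swap ?_
    have hmeas : AEStronglyMeasurable (Function.uncurry fun y u => G x y u * q x * q y)
        (volume.prod μ) := by
      have m1 : Measurable fun z : (EuclideanSpace ℝ (Fin d)) × (EuclideanSpace ℝ (Fin d)) => G x z.1 z.2 := by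
        simp only [hG_def]
        refine Measurable.add ?_ ?_
        · exact ((Real.measurable_cos.comp
            (measurable_snd.inner (measurable_const.sub measurable_fst))).mul
            (((measurable_snd.norm.pow measurable_const)).add
              (measurable_const.inner (hglpm.comp measurable_fst))))
        · exact ((Real.measurable_sin.comp
            (measurable_snd.inner (measurable_const.sub measurable_fst))).mul
            ((measurable_snd.inner measurable_const).sub
              (measurable_snd.inner ((hglpm.comp measurable_fst)))))
      exact ((m1.aestronglyMeasurable.mul aestronglyMeasurable_const).mul hqint.1.comp_fst)
    refine (qg_int.mul_prod (mu_int.const_mul (2 * q x * (1 + ‖glp x‖)))).mono' hmeas ?_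
    filter_upwards with z
    obtain ⟨y, u⟩ := z
    have habs := abs_G_le glp x y u
    have hb := norm_nonneg (glp y)
    have ha := norm_nonneg (glp x)
    have ht := norm_nonneg u
    have h1 : ‖G x y u * q x * q y‖ = |G x y u| * q x * q y := by
      rw [Real.norm_eq_abs, abs_mul, abs_mul, _root_.abs_of_nonneg (hq0 x),
        _root_.abs_of_nonneg (hq0 y)]
    rw [Function.uncurry]
    simp only []
    rw [h1]
    have h2 : |G x y u| * q x * q y
        ≤ (2 * (1 + ‖glp x‖) * (1 + ‖glp y‖) * (1 + ‖u‖ ^ 2)) * q x * q y := by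
      have := mul_le_mul_of_nonneg_right (mul_le_mul_of_nonneg_right habs (hq0 x)) (hq0 y)
      linarith
    refine h2.trans (le_of_eq ?_)
    ring
  -- integrability for the second swap
  have swap2int : Integrable (Function.uncurry H) (volume.prod μ) := by
    have hmeas : AEStronglyMeasurable (Function.uncurry H) (volume.prod μ) := by
      have mqc : AEStronglyMeasurable (fun z : (EuclideanSpace ℝ (Fin d)) × (EuclideanSpace ℝ (Fin d)) => q z.1 * Real.cos ⟪z.2, z.1⟫)
          (volume.prod μ) :=
        hqint.1.comp_fst.mul (Real.continuous_cos.comp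
          (continuous_snd.inner continuous_fst)).aestronglyMeasurable
      have mqs : AEStronglyMeasurable (fun z : (EuclideanSpace ℝ (Fin d)) × (EuclideanSpace ℝ (Fin d)) => q z.1 * Real.sin ⟪z.2, z.1⟫)
          (volume.prod μ) :=
        hqint.1.comp_fst.mul (Real.continuous_sin.comp
          (continuous_snd.inner continuous_fst)).aestronglyMeasurable
      have mg : AEStronglyMeasurable (fun z : (EuclideanSpace ℝ (Fin d)) × (EuclideanSpace ℝ (Fin d)) => glp z.1) (volume.prod μ) :=
        (hglpm.comp measurable_fst).aestronglyMeasurable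
      simp only [hH_def, Function.uncurry]
      refine ((((mqc.mul ?_).add (mqs.mul ?_)).add ?_).add ?_)
      · exact (((cA.comp continuous_snd).mul ((continuous_snd.norm.pow 2))).add
          (continuous_snd.inner (cS.comp continuous_snd))).aestronglyMeasurable
      · exact (((cB.comp continuous_snd).mul ((continuous_snd.norm.pow 2))).sub
          (continuous_snd.inner (cC.comp continuous_snd))).aestronglyMeasurable
      · exact AEStronglyMeasurable.inner
          (((cC.comp continuous_snd).sub
            ((cB.comp continuous_snd).smul continuous_snd)).aestronglyMeasurable)
          (mqc.smul mg)
      · exact AEStronglyMeasurable.inner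
          (((cS.comp continuous_snd).add
            ((cA.comp continuous_snd).smul continuous_snd)).aestronglyMeasurable)
          (mqs.smul mg)
    refine (qg_int.mul_prod (mu_int.const_mul (2 + 2 * M))).mono' hmeas ?_
    filter_upwards with z
    obtain ⟨x, u⟩ := z
    have ha := norm_nonneg (glp x)
    have ht := norm_nonneg u
    have e0c : |q x * Real.cos ⟪u, x⟫| ≤ q x := by
      rw [abs_mul, _root_.abs_of_nonneg (hq0 x)]
      calc q x * |Real.cos ⟪u, x⟫| ≤ q x * 1 := mul_le_mul_of_nonneg_left (hcos1 _) (hq0 x)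
        _ = q x := mul_one _
    have e0s : |q x * Real.sin ⟪u, x⟫| ≤ q x := by
      rw [abs_mul, _root_.abs_of_nonneg (hq0 x)]
      calc q x * |Real.sin ⟪u, x⟫| ≤ q x * 1 := mul_le_mul_of_nonneg_left (hsin1 _) (hq0 x)
        _ = q x := mul_one _
    have eS : |A u * ‖u‖ ^ 2 + ⟪u, S u⟫| ≤ ‖u‖ ^ 2 + ‖u‖ * M := by
      refine (abs_add_le _ _).trans ?_
      have b1 : |A u * ‖u‖ ^ 2| ≤ ‖u‖ ^ 2 := by
        rw [abs_mul, _root_.abs_of_nonneg (sq_nonneg ‖u‖)]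
        nlinarith [hAb u, abs_nonneg (A u), sq_nonneg ‖u‖]
      have b2 : |⟪u, S u⟫| ≤ ‖u‖ * M :=
        (abs_real_inner_le_norm u (S u)).trans
          (mul_le_mul_of_nonneg_left (hSb u) (norm_nonneg u))
      linarith
    have eC : |B u * ‖u‖ ^ 2 - ⟪u, C u⟫| ≤ ‖u‖ ^ 2 + ‖u‖ * M := by
      refine (abs_sub _ _).trans ?_
      have b1 : |B u * ‖u‖ ^ 2| ≤ ‖u‖ ^ 2 := by
        rw [abs_mul, _root_.abs_of_nonneg (sq_nonneg ‖u‖)]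
        nlinarith [hBb u, abs_nonneg (B u), sq_nonneg ‖u‖]
      have b2 : |⟪u, C u⟫| ≤ ‖u‖ * M :=
        (abs_real_inner_le_norm u (C u)).trans
          (mul_le_mul_of_nonneg_left (hCb u) (norm_nonneg u))
      linarith
    have nv : ‖C u - B u • u‖ ≤ M + ‖u‖ := by
      refine (norm_sub_le _ _).trans ?_
      have : ‖B u • u‖ = |B u| * ‖u‖ := by rw [norm_smul, Real.norm_eq_abs]
      have h2 : ‖B u • u‖ ≤ ‖u‖ := by
        rw [this]; nlinarith [hBb u, abs_nonneg (B u), norm_nonneg u]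
      linarith [hCb u]
    have nw : ‖S u + A u • u‖ ≤ M + ‖u‖ := by
      refine (norm_add_le _ _).trans ?_
      have : ‖A u • u‖ = |A u| * ‖u‖ := by rw [norm_smul, Real.norm_eq_abs]
      have h2 : ‖A u • u‖ ≤ ‖u‖ := by
        rw [this]; nlinarith [hAb u, abs_nonneg (A u), norm_nonneg u]
      linarith [hSb u]
    have ngc : ‖(q x * Real.cos ⟪u, x⟫) • glp x‖ ≤ q x * ‖glp x‖ := by
      rw [norm_smul, Real.norm_eq_abs]
      exact mul_le_mul_of_nonneg_right e0c (norm_nonneg _)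
    have ngs : ‖(q x * Real.sin ⟪u, x⟫) • glp x‖ ≤ q x * ‖glp x‖ := by
      rw [norm_smul, Real.norm_eq_abs]
      exact mul_le_mul_of_nonneg_right e0s (norm_nonneg _)
    have e1 : |(q x * Real.cos ⟪u, x⟫) * (A u * ‖u‖ ^ 2 + ⟪u, S u⟫)|
        ≤ q x * (‖u‖ ^ 2 + ‖u‖ * M) := by
      rw [abs_mul]
      exact mul_le_mul e0c eS (abs_nonneg _) (hq0 x)
    have e2 : |(q x * Real.sin ⟪u, x⟫) * (B u * ‖u‖ ^ 2 - ⟪u, C u⟫)|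
        ≤ q x * (‖u‖ ^ 2 + ‖u‖ * M) := by
      rw [abs_mul]
      exact mul_le_mul e0s eC (abs_nonneg _) (hq0 x)
    have e3 : |⟪C u - B u • u, (q x * Real.cos ⟪u, x⟫) • glp x⟫|
        ≤ (M + ‖u‖) * (q x * ‖glp x‖) := by
      refine (abs_real_inner_le_norm _ _).trans ?_
      exact mul_le_mul nv ngc (norm_nonneg _) (by linarith)
    have e4 : |⟪S u + A u • u, (q x * Real.sin ⟪u, x⟫) • glp x⟫|
        ≤ (M + ‖u‖) * (q x * ‖glp x‖) := by
      refine (abs_real_inner_le_norm _ _).trans ?_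
      exact mul_le_mul nw ngs (norm_nonneg _) (by linarith)
    have htot : |H x u| ≤ 2 * (q x * (‖u‖ ^ 2 + ‖u‖ * M)) + 2 * ((M + ‖u‖) * (q x * ‖glp x‖)) := by
      simp only [hH_def]
      calc |(q x * Real.cos ⟪u, x⟫) * (A u * ‖u‖ ^ 2 + ⟪u, S u⟫)
          + (q x * Real.sin ⟪u, x⟫) * (B u * ‖u‖ ^ 2 - ⟪u, C u⟫)
          + ⟪C u - B u • u, (q x * Real.cos ⟪u, x⟫) • glp x⟫
          + ⟪S u + A u • u, (q x * Real.sin ⟪u, x⟫) • glp x⟫|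
          ≤ |(q x * Real.cos ⟪u, x⟫) * (A u * ‖u‖ ^ 2 + ⟪u, S u⟫)
            + (q x * Real.sin ⟪u, x⟫) * (B u * ‖u‖ ^ 2 - ⟪u, C u⟫)
            + ⟪C u - B u • u, (q x * Real.cos ⟪u, x⟫) • glp x⟫|
            + |⟪S u + A u • u, (q x * Real.sin ⟪u, x⟫) • glp x⟫| := abs_add_le _ _
        _ ≤ |(q x * Real.cos ⟪u, x⟫) * (A u * ‖u‖ ^ 2 + ⟪u, S u⟫)
            + (q x * Real.sin ⟪u, x⟫) * (B u * ‖u‖ ^ 2 - ⟪u, C u⟫)|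
            + |⟪C u - B u • u, (q x * Real.cos ⟪u, x⟫) • glp x⟫|
            + |⟪S u + A u • u, (q x * Real.sin ⟪u, x⟫) • glp x⟫| := by
              linarith [abs_add_le ((q x * Real.cos ⟪u, x⟫) * (A u * ‖u‖ ^ 2 + ⟪u, S u⟫)
                + (q x * Real.sin ⟪u, x⟫) * (B u * ‖u‖ ^ 2 - ⟪u, C u⟫))
                (⟪C u - B u • u, (q x * Real.cos ⟪u, x⟫) • glp x⟫ : ℝ)]
        _ ≤ _ := by
              have := abs_add_le ((q x * Real.cos ⟪u, x⟫) * (A u * ‖u‖ ^ 2 + ⟪u, S u⟫))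
                ((q x * Real.sin ⟪u, x⟫) * (B u * ‖u‖ ^ 2 - ⟪u, C u⟫))
              linarith
    rw [Function.uncurry]
    simp only []
    rw [Real.norm_eq_abs]
    refine htot.trans ?_
    have hqx := hq0 x
    nlinarith [sq_nonneg (‖u‖ - 1), mul_nonneg hqx hM0, mul_nonneg (mul_nonneg hqx hM0) (sq_nonneg (‖u‖-1)),
      mul_nonneg (mul_nonneg hqx ha) hM0, mul_nonneg hqx (sq_nonneg (‖u‖-1)),
      mul_nonneg (mul_nonneg hqx ha) (sq_nonneg (‖u‖-1)), mul_nonneg (mul_nonneg hqx ha) (sq_nonneg ‖u‖),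
      mul_nonneg hqx ha, mul_nonneg hqx ht, mul_nonneg (mul_nonneg hqx ha) ht]
  -- final per-u computation
  have hx : ∀ u : (EuclideanSpace ℝ (Fin d)), (∫ x, H x u)
      = ‖A u • u + S u‖ ^ 2 + ‖B u • u - C u‖ ^ 2 := by
    intro u
    have := int_combo (fun x : (EuclideanSpace ℝ (Fin d)) => q x * Real.cos ⟪u, x⟫) (fun x : (EuclideanSpace ℝ (Fin d)) => q x * Real.sin ⟪u, x⟫)
      glp (iqc u) (iqs u) (iqcg u) (iqsg u)
      (A u * ‖u‖ ^ 2 + ⟪u, S u⟫) (B u * ‖u‖ ^ 2 - ⟪u, C u⟫)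
      (C u - B u • u) (S u + A u • u)
    rw [hH_def]
    rw [this]
    rw [show (∫ x, q x * Real.cos ⟪u, x⟫) = A u from rfl, show (∫ x, q x * Real.sin ⟪u, x⟫) = B u from rfl,
      show (∫ x, (q x * Real.cos ⟪u, x⟫) • glp x) = C u from rfl,
      show (∫ x, (q x * Real.sin ⟪u, x⟫) • glp x) = S u from rfl]
    have expand1 : ‖A u • u + S u‖ ^ 2
        = A u * A u * ‖u‖ ^ 2 + 2 * (A u * ⟪u, S u⟫) + ‖S u‖ ^ 2 := by
      rw [norm_add_sq_real, real_inner_smul_left, norm_smul,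
        Real.norm_eq_abs, mul_pow, _root_.sq_abs]
      ring
    have expand2 : ‖B u • u - C u‖ ^ 2
        = B u * B u * ‖u‖ ^ 2 - 2 * (B u * ⟪u, C u⟫) + ‖C u‖ ^ 2 := by
      rw [norm_sub_sq_real, real_inner_smul_left, norm_smul,
        Real.norm_eq_abs, mul_pow, _root_.sq_abs]
      ring
    rw [expand1, expand2]
    simp only [inner_sub_left, inner_add_left, real_inner_smul_left, real_inner_self_eq_norm_sq]
    ring
  -- assemble
  calc ∫ x, ∫ y, langevinHv k glp x y * q x * q y
      = ∫ x, ∫ y, ∫ u, G x y u * q x * q y ∂μ := by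
        refine integral_congr_ae (Filter.Eventually.of_forall fun x => ?_)
        refine integral_congr_ae (Filter.Eventually.of_forall fun y => ?_)
        show langevinHv k glp x y * q x * q y = ∫ u, G x y u * q x * q y ∂μ
        rw [langevinHv_eq k hk hμ2 glp x y, ← integral_mul_const, ← integral_mul_const]
    _ = ∫ x, ∫ u, (∫ y, G x y u * q x * q y) ∂μ := by
        refine integral_congr_ae (Filter.Eventually.of_forall fun x => ?_)
        exact swap1 x
    _ = ∫ x, ∫ u, H x u ∂μ := by
        refine integral_congr_ae (Filter.Eventually.of_forall fun x => ?_)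
        refine integral_congr_ae (Filter.Eventually.of_forall fun u => ?_)
        exact hy x u
    _ = ∫ u, (∫ x, H x u) ∂μ := integral_integral_swap swap2int
    _ = ∫ u, (‖A u • u + S u‖ ^ 2 + ‖B u • u - C u‖ ^ 2) ∂μ := by
        refine integral_congr_ae (Filter.Eventually.of_forall fun u => ?_)
        exact hx u


end
end

section
/- Explicit vectorised Stein kernel for the squared-exponential kernel (Proposition 4, SE case): let T : X → X be a bounded linear operator, S = T*T, and k(x,y) = exp(−½‖Tx − Ty‖²). Then for all x, y ∈ X the vectorised Stein kernel satisfies h_v(x,y) = k(x,y) · ( ⟨x + C DU(x), y + C DU(y)⟩ − ⟨SC(x−y), x−y⟩ − ⟨SC(C DU(x) − C DU(y)), x−y⟩ + Tr(SC²) − ‖CS(x−y)‖² ), where Tr(SC²) := ∑_{i≥1} λ_i² ⟨S e_i, e_i⟩. -/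
open MeasureTheory ProbabilityTheory Complex Filter
open scoped RealInnerProductSpace

/-- The vectorised Stein kernel `h_v` associated to the kernel `k`, the covariance
operator `C` (with eigenbasis `e` and eigenvalues `l`) and the potential gradient `DU`. -/
noncomputable def steinKernelHv {X : Type*} [NormedAddCommGroup X] [InnerProductSpace ℝ X]
    (k : X → X → ℝ) (C : X →L[ℝ] X) (DU : X → X) (e : ℕ → X) (l : ℕ → ℝ)
    (x x' : X) : ℝ :=
  (∑' i, l i ^ 2 *
      fderiv ℝ (fun y1 => fderiv ℝ (fun x1 => k x1 y1) x (e i)) x' (e i))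
  - fderiv ℝ (fun x1 => k x1 x') x (C x' + C (C (DU x')))
  - fderiv ℝ (fun y1 => k x y1) x' (C x + C (C (DU x)))
  + k x x' * ⟪x + C (DU x), x' + C (DU x')⟫

section Aux

open ContinuousLinearMap

variable {X : Type*} [NormedAddCommGroup X] [InnerProductSpace ℝ X] [CompleteSpace X]

lemma seK_hasFDerivAt_left (T S : X →L[ℝ] X) (hS : S = (adjoint T).comp T) (y x : X) :
    HasFDerivAt (fun x1 => Real.exp (-(1 / 2) * ‖T x1 - T y‖ ^ 2))
      ((-(Real.exp (-(1 / 2) * ‖T x - T y‖ ^ 2))) • (innerSL ℝ (S (x - y)))) x := by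
  have h1 : HasFDerivAt (fun x1 => T x1 - T y) (T : X →L[ℝ] X) x :=
    (T.hasFDerivAt).sub_const _
  have h2 := (h1.inner ℝ h1).const_mul (-(1/2) : ℝ)
  have h3 := h2.exp
  have h4 : (fun x1 => Real.exp (-(1/2) * ⟪T x1 - T y, T x1 - T y⟫)) =
      fun x1 => Real.exp (-(1 / 2) * ‖T x1 - T y‖ ^ 2) := by
    funext z; rw [real_inner_self_eq_norm_sq]
  rw [h4] at h3
  have heq : ((-(Real.exp (-(1 / 2) * ‖T x - T y‖ ^ 2))) • (innerSL ℝ (S (x - y))) : X →L[ℝ] ℝ)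
      = Real.exp (-(1 / 2) * ⟪T x - T y, T x - T y⟫) •
        (-(1 / 2) : ℝ) • (fderivInnerCLM ℝ (T x - T y, T x - T y)).comp (T.prod T) := by
    ext v
    simp only [coe_smul', Pi.smul_apply, innerSL_apply_apply, smul_eq_mul, coe_comp',
      Function.comp_apply, fderivInnerCLM_apply, prod_apply, real_inner_self_eq_norm_sq]
    have hv : ⟪S (x - y), v⟫ = ⟪T x - T y, T v⟫ := by
      rw [hS]; simp only [coe_comp', Function.comp_apply]
      rw [map_sub T, adjoint_inner_left]
    rw [hv, real_inner_comm (T v)]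
    ring
  rw [heq]
  exact h3

lemma seK_hasFDerivAt_right (T S : X →L[ℝ] X) (hS : S = (adjoint T).comp T) (x y : X) :
    HasFDerivAt (fun y1 => Real.exp (-(1 / 2) * ‖T x - T y1‖ ^ 2))
      ((Real.exp (-(1 / 2) * ‖T x - T y‖ ^ 2)) • (innerSL ℝ (S (x - y)))) y := by
  have h := seK_hasFDerivAt_left T S hS x y
  have hfun : (fun y1 => Real.exp (-(1 / 2) * ‖T y1 - T x‖ ^ 2)) =
      fun y1 => Real.exp (-(1 / 2) * ‖T x - T y1‖ ^ 2) := by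
    funext z; rw [norm_sub_rev]
  rw [hfun] at h
  have heq : ((-(Real.exp (-(1 / 2) * ‖T y - T x‖ ^ 2))) • (innerSL ℝ (S (y - x))) : X →L[ℝ] ℝ)
      = (Real.exp (-(1 / 2) * ‖T x - T y‖ ^ 2)) • (innerSL ℝ (S (x - y))) := by
    rw [norm_sub_rev]
    ext v
    simp only [coe_smul', Pi.smul_apply, innerSL_apply_apply, smul_eq_mul]
    have : S (y - x) = -(S (x - y)) := by rw [← map_neg]; congr 1; abel
    rw [this, inner_neg_left]
    ring
  rw [heq] at h
  exact h

lemma seK_hasFDerivAt_mixed (T S : X →L[ℝ] X) (hS : S = (adjoint T).comp T) (x v y : X) :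
    HasFDerivAt (fun y1 => -(Real.exp (-(1 / 2) * ‖T x - T y1‖ ^ 2)) * ⟪S (x - y1), v⟫)
      ((Real.exp (-(1 / 2) * ‖T x - T y‖ ^ 2)) •
        ((innerSL ℝ v).comp S - ⟪S (x - y), v⟫ • innerSL ℝ (S (x - y)))) y := by
  have ha := seK_hasFDerivAt_right T S hS x y
  have hb : HasFDerivAt (fun y1 : X => ⟪S (x - y1), v⟫) (-((innerSL ℝ v).comp S)) y := by
    have hf : (fun y1 : X => ⟪S (x - y1), v⟫)
        = fun y1 => ⟪S x, v⟫ - ((innerSL ℝ v).comp S) y1 := by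
      funext z
      simp only [map_sub, inner_sub_left, coe_comp', Function.comp_apply, innerSL_apply_apply]
      rw [real_inner_comm (S z) v]
    rw [hf]
    exact ((hasFDerivAt_const (⟪S x, v⟫) y).sub ((innerSL ℝ v).comp S).hasFDerivAt).congr_fderiv
      (by simp)
  have h := (ha.mul hb).neg
  have heq : (-((Real.exp (-(1 / 2) * ‖T x - T y‖ ^ 2)) • (-((innerSL ℝ v).comp S))
        + ⟪S (x - y), v⟫ • ((Real.exp (-(1 / 2) * ‖T x - T y‖ ^ 2)) • innerSL ℝ (S (x - y))))
        : X →L[ℝ] ℝ)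
      = (Real.exp (-(1 / 2) * ‖T x - T y‖ ^ 2)) •
        ((innerSL ℝ v).comp S - ⟪S (x - y), v⟫ • innerSL ℝ (S (x - y))) := by
    ext w
    simp only [coe_smul', Pi.smul_apply, innerSL_apply_apply, smul_eq_mul, coe_comp',
      Function.comp_apply, neg_apply, add_apply, ContinuousLinearMap.sub_apply,
      ContinuousLinearMap.neg_apply]
    ring
  rw [heq] at h
  refine h.congr_of_eventuallyEq (Filter.Eventually.of_forall fun y1 => ?_)
  simp only [Pi.neg_apply, Pi.mul_apply]
  ring

lemma seK_parseval (e : HilbertBasis ℕ ℝ X) (v : X) :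
    HasSum (fun i => ⟪v, e i⟫ ^ 2) (‖v‖ ^ 2) := by
  have h := e.hasSum_inner_mul_inner v v
  rw [real_inner_self_eq_norm_sq] at h
  have hf : (fun i => ⟪v, e i⟫ ^ 2) = fun i => ⟪v, e i⟫ * ⟪e i, v⟫ := by
    funext i
    rw [sq, real_inner_comm v (e i)]
  rw [hf]
  exact h

lemma seK_sq_summable (l : ℕ → ℝ) (hl : ∀ i, 0 < l i) (hltr : Summable l) :
    Summable (fun i => l i ^ 2) := by
  refine Summable.of_norm_bounded_eventually hltr ?_
  rw [Nat.cofinite_eq_atTop]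
  have := hltr.tendsto_atTop_zero
  filter_upwards [this.eventually_le_const (by norm_num : (0:ℝ) < 1)] with i hi
  have h0 := (hl i).le
  rw [Real.norm_eq_abs, _root_.abs_of_nonneg (by positivity)]
  nlinarith

end Aux

/-- **Explicit vectorised Stein kernel for the squared-exponential kernel**
(Proposition 4, SE case): with `S = T*T` and `k(x,y) = exp(-½‖Tx - Ty‖²)`,
`h_v(x,y) = k(x,y)(⟪x + CDU(x), y + CDU(y)⟫ − ⟪SC(x−y), x−y⟫ −
⟪SC(CDU(x) − CDU(y)), x−y⟫ + Tr(SC²) − ‖CS(x−y)‖²)`, where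
`Tr(SC²) = ∑ᵢ λᵢ² ⟪S eᵢ, eᵢ⟫`. -/
theorem se_kernel_stein_kernel_explicit
    {X : Type*} [NormedAddCommGroup X] [InnerProductSpace ℝ X] [CompleteSpace X]
    [MeasurableSpace X] [BorelSpace X] [SecondCountableTopology X]
    -- the covariance operator and its eigendecomposition
    (C : X →L[ℝ] X) (hCsa : IsSelfAdjoint C)
    (e : HilbertBasis ℕ ℝ X) (l : ℕ → ℝ) (hl : ∀ i, 0 < l i)
    (hCe : ∀ i, C (e i) = l i • e i) (hltr : Summable l)
    -- the potential `U` and its gradient `DU`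
    (U : X → ℝ) (DU : X → X)
    (hU : ∀ x, HasFDerivAt U ((InnerProductSpace.toDual ℝ X) (DU x) : X →L[ℝ] ℝ) x)
    -- the operator `T`, `S = T*T`, and the SE-`T` kernel
    (T : X →L[ℝ] X) (S : X →L[ℝ] X)
    (hS : S = (ContinuousLinearMap.adjoint T).comp T)
    (k : X → X → ℝ)
    (hk : ∀ x y : X, k x y = Real.exp (-(1 / 2) * ‖T x - T y‖ ^ 2)) :
    ∀ x y : X,
      steinKernelHv k C DU (fun i => e i) l x y
        = k x y *
            (⟪x + C (DU x), y + C (DU y)⟫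
              - ⟪S (C (x - y)), x - y⟫
              - ⟪S (C (C (DU x) - C (DU y))), x - y⟫
              + (∑' i, l i ^ 2 * ⟪S (e i), e i⟫)
              - ‖C (S (x - y))‖ ^ 2) := by
  intro x y
  have hCadj : ∀ a b : X, ⟪C a, b⟫ = ⟪a, C b⟫ := by
    intro a b
    conv_lhs => rw [← ContinuousLinearMap.isSelfAdjoint_iff'.mp hCsa]
    rw [ContinuousLinearMap.adjoint_inner_left]
  have hSadj : ∀ a b : X, ⟪S a, b⟫ = ⟪a, S b⟫ := by
    intro a b
    rw [hS]
    simp only [ContinuousLinearMap.coe_comp', Function.comp_apply]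
    rw [ContinuousLinearMap.adjoint_inner_left, ← ContinuousLinearMap.adjoint_inner_right]
  have hSC : ∀ a b : X, ⟪S (C a), b⟫ = ⟪S b, C a⟫ := by
    intro a b
    rw [hSadj, real_inner_comm]
  -- the first-variable derivative
  have hfx : fderiv ℝ (fun x1 => k x1 y) x = (-(k x y)) • innerSL ℝ (S (x - y)) := by
    have hfun : (fun x1 => k x1 y)
        = fun x1 => Real.exp (-(1 / 2) * ‖T x1 - T y‖ ^ 2) := funext fun z => hk z y
    rw [hfun, (seK_hasFDerivAt_left T S hS y x).fderiv, hk]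
  -- the second-variable derivative
  have hfy : fderiv ℝ (fun y1 => k x y1) y = (k x y) • innerSL ℝ (S (x - y)) := by
    have hfun : (fun y1 => k x y1)
        = fun y1 => Real.exp (-(1 / 2) * ‖T x - T y1‖ ^ 2) := funext fun z => hk x z
    rw [hfun, (seK_hasFDerivAt_right T S hS x y).fderiv, hk]
  -- the mixed second derivative
  have hmix : ∀ i : ℕ,
      fderiv ℝ (fun y1 => fderiv ℝ (fun x1 => k x1 y1) x (e i)) y (e i)
        = k x y * (⟪S (e i), e i⟫ - ⟪S (x - y), e i⟫ * ⟪S (x - y), e i⟫) := by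
    intro i
    have hfun : (fun y1 => fderiv ℝ (fun x1 => k x1 y1) x (e i))
        = fun y1 => -(Real.exp (-(1 / 2) * ‖T x - T y1‖ ^ 2)) * ⟪S (x - y1), e i⟫ := by
      funext y1
      have hfun2 : (fun x1 => k x1 y1)
          = fun x1 => Real.exp (-(1 / 2) * ‖T x1 - T y1‖ ^ 2) := funext fun z => hk z y1
      rw [hfun2, (seK_hasFDerivAt_left T S hS y1 x).fderiv]
      simp only [ContinuousLinearMap.coe_smul', Pi.smul_apply, innerSL_apply_apply, smul_eq_mul]
    rw [hfun, (seK_hasFDerivAt_mixed T S hS x (e i) y).fderiv, hk]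
    simp only [ContinuousLinearMap.coe_smul', Pi.smul_apply,
      ContinuousLinearMap.coe_sub', Pi.sub_apply, ContinuousLinearMap.coe_comp',
      Function.comp_apply, innerSL_apply_apply, smul_eq_mul]
    rw [real_inner_comm (e i) (S (e i))]
  -- eigenvalue identity
  have hkey : ∀ i : ℕ, l i * ⟪S (x - y), e i⟫ = ⟪C (S (x - y)), e i⟫ := by
    intro i
    rw [hCadj, hCe i, real_inner_smul_right]
  -- summability facts
  have hl2 : Summable (fun i => l i ^ 2) := seK_sq_summable l hl hltr
  have hA : Summable (fun i => l i ^ 2 * ⟪S (e i), e i⟫) := by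
    refine Summable.of_norm_bounded (g := fun i => ‖S‖ * l i ^ 2) (hl2.mul_left _) ?_
    intro i
    rw [Real.norm_eq_abs, abs_mul, _root_.abs_of_nonneg (sq_nonneg (l i))]
    have h1 : |⟪S (e i), e i⟫| ≤ ‖S‖ := by
      calc |⟪S (e i), e i⟫| ≤ ‖S (e i)‖ * ‖e i‖ := abs_real_inner_le_norm _ _
        _ ≤ (‖S‖ * ‖e i‖) * ‖e i‖ := by gcongr; exact S.le_opNorm _
        _ = ‖S‖ := by rw [e.orthonormal.1 i]; ring
    show l i ^ 2 * |⟪S (e i), e i⟫| ≤ ‖S‖ * l i ^ 2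
    calc l i ^ 2 * |⟪S (e i), e i⟫| ≤ l i ^ 2 * ‖S‖ :=
          mul_le_mul_of_nonneg_left h1 (sq_nonneg _)
      _ = ‖S‖ * l i ^ 2 := mul_comm _ _
  have hB : HasSum (fun i => ⟪C (S (x - y)), e i⟫ ^ 2) (‖C (S (x - y))‖ ^ 2) :=
    seK_parseval e _
  -- the trace/series term
  have htsum : (∑' i, l i ^ 2 *
        fderiv ℝ (fun y1 => fderiv ℝ (fun x1 => k x1 y1) x (e i)) y (e i))
      = k x y * ((∑' i, l i ^ 2 * ⟪S (e i), e i⟫) - ‖C (S (x - y))‖ ^ 2) := by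
    calc (∑' i, l i ^ 2 *
          fderiv ℝ (fun y1 => fderiv ℝ (fun x1 => k x1 y1) x (e i)) y (e i))
        = ∑' i, k x y * (l i ^ 2 * ⟪S (e i), e i⟫ - ⟪C (S (x - y)), e i⟫ ^ 2) := by
          refine tsum_congr fun i => ?_
          rw [hmix i, ← hkey i]
          ring
      _ = k x y * ∑' i, (l i ^ 2 * ⟪S (e i), e i⟫ - ⟪C (S (x - y)), e i⟫ ^ 2) :=
          tsum_mul_left
      _ = k x y * ((∑' i, l i ^ 2 * ⟪S (e i), e i⟫) - ∑' i, ⟪C (S (x - y)), e i⟫ ^ 2) := by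
          rw [hA.tsum_sub hB.summable]
      _ = k x y * ((∑' i, l i ^ 2 * ⟪S (e i), e i⟫) - ‖C (S (x - y))‖ ^ 2) := by
          rw [hB.tsum_eq]
  -- put everything together
  simp only [steinKernelHv]
  rw [htsum, hfx, hfy]
  simp only [ContinuousLinearMap.coe_smul', Pi.smul_apply, innerSL_apply_apply, smul_eq_mul]
  rw [hSC (x - y) (x - y), hSC (C (DU x) - C (DU y)) (x - y)]
  simp only [map_sub, inner_sub_right, inner_add_right]
  ring
end

section
/- Explicit vectorised Stein kernel for the inverse multiquadric kernel (Proposition 4, IMQ case): let T : X → X be a bounded linear operator, S = T*T, and k(x,y) = (‖Tx − Ty‖² + 1)^{−1/2}. Then for all x, y ∈ X the vectorised Stein kernel satisfies h_v(x,y) = k(x,y) ⟨x + C DU(x), y + C DU(y)⟩ + k(x,y)³ ( Tr(SC²) − ⟨SC(x−y), x−y⟩ − ⟨SC(C DU(x) − C DU(y)), x−y⟩ ) − 3 k(x,y)⁵ ‖CS(x−y)‖², where Tr(SC²) := ∑_{i≥1} λ_i² ⟨S e_i, e_i⟩. -/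
open MeasureTheory ProbabilityTheory Complex Filter
open scoped RealInnerProductSpace

section aux
variable {X : Type*} [NormedAddCommGroup X] [InnerProductSpace ℝ X] [CompleteSpace X]

lemma imq_fst_pow (T S : X →L[ℝ] X) (hS : S = (ContinuousLinearMap.adjoint T).comp T)
    (x y : X) (p : ℝ) :
    HasFDerivAt (fun x1 : X => (‖T x1 - T y‖ ^ 2 + 1) ^ p)
      ((2 * p * (‖T x - T y‖ ^ 2 + 1) ^ (p - 1)) • innerSL ℝ (S (x - y))) x := by
  have hg : HasFDerivAt (fun x1 : X => ‖T x1 - T y‖ ^ 2 + 1)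
      ((2 • (innerSL ℝ (T x - T y)).comp (T : X →L[ℝ] X))) x :=
    ((T.hasFDerivAt.sub_const (T y)).norm_sq).add_const 1
  have hpos : (0:ℝ) < ‖T x - T y‖ ^ 2 + 1 := by positivity
  have h := (Real.hasDerivAt_rpow_const (x := ‖T x - T y‖ ^ 2 + 1) (p := p)
    (Or.inl hpos.ne')).comp_hasFDerivAt x hg
  refine h.congr_fderiv ?_
  ext v
  simp only [ContinuousLinearMap.smul_apply, innerSL_apply_apply, ContinuousLinearMap.coe_smul',
    Pi.smul_apply, ContinuousLinearMap.coe_comp', Function.comp_apply, smul_eq_mul,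
    two_smul, ContinuousLinearMap.add_apply]
  have hi : ⟪S (x - y), v⟫ = ⟪T x - T y, T v⟫ := by
    rw [hS, ContinuousLinearMap.comp_apply, ContinuousLinearMap.adjoint_inner_left, map_sub]
  rw [hi]; ring

lemma imq_snd_pow (T S : X →L[ℝ] X) (hS : S = (ContinuousLinearMap.adjoint T).comp T)
    (x y : X) (p : ℝ) :
    HasFDerivAt (fun y1 : X => (‖T x - T y1‖ ^ 2 + 1) ^ p)
      ((-(2 * p * (‖T x - T y‖ ^ 2 + 1) ^ (p - 1))) • innerSL ℝ (S (x - y))) y := by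
  have hg : HasFDerivAt (fun y1 : X => ‖T x - T y1‖ ^ 2 + 1)
      ((2 • (innerSL ℝ (T x - T y)).comp (-T : X →L[ℝ] X))) y :=
    ((T.hasFDerivAt.const_sub (T x)).norm_sq).add_const 1
  have hpos : (0:ℝ) < ‖T x - T y‖ ^ 2 + 1 := by positivity
  have h := (Real.hasDerivAt_rpow_const (x := ‖T x - T y‖ ^ 2 + 1) (p := p)
    (Or.inl hpos.ne')).comp_hasFDerivAt y hg
  refine h.congr_fderiv ?_
  ext v
  simp only [ContinuousLinearMap.smul_apply, innerSL_apply_apply, ContinuousLinearMap.coe_smul',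
    Pi.smul_apply, ContinuousLinearMap.coe_comp', Function.comp_apply, smul_eq_mul,
    two_smul, ContinuousLinearMap.add_apply, ContinuousLinearMap.neg_apply, inner_neg_right]
  have hi : ⟪S (x - y), v⟫ = ⟪T x - T y, T v⟫ := by
    rw [hS, ContinuousLinearMap.comp_apply, ContinuousLinearMap.adjoint_inner_left, map_sub]
  rw [hi]; ring

lemma imq_mixed (T S : X →L[ℝ] X) (hS : S = (ContinuousLinearMap.adjoint T).comp T)
    (x y v w : X) :
    fderiv ℝ (fun y1 : X => -((‖T x - T y1‖ ^ 2 + 1) ^ (-(3/2) : ℝ)) * ⟪S (x - y1), v⟫) y w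
      = -(3 * (‖T x - T y‖ ^ 2 + 1) ^ (-(5/2) : ℝ) * ⟪S (x - y), w⟫ * ⟪S (x - y), v⟫)
        + (‖T x - T y‖ ^ 2 + 1) ^ (-(3/2) : ℝ) * ⟪S w, v⟫ := by
  have hA : HasFDerivAt (fun y1 : X => -((‖T x - T y1‖ ^ 2 + 1) ^ (-(3/2) : ℝ)))
      (-((-(2 * (-(3/2)) * (‖T x - T y‖ ^ 2 + 1) ^ ((-(3/2) : ℝ) - 1))) • innerSL ℝ (S (x - y)))) y :=
    (imq_snd_pow T S hS x y (-(3/2))).neg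
  have hB : HasFDerivAt (fun y1 : X => ⟪S (x - y1), v⟫) (-((innerSL ℝ v).comp S)) y := by
    have h1 : (fun y1 : X => ⟪S (x - y1), v⟫)
        = fun y1 => ⟪S x, v⟫ - ((innerSL ℝ v).comp S) y1 := by
      funext y1
      simp [map_sub, inner_sub_left, real_inner_comm]
    rw [h1]
    exact (((innerSL ℝ v).comp S).hasFDerivAt).const_sub _
  have hAB : HasFDerivAt (fun y1 : X => -((‖T x - T y1‖ ^ 2 + 1) ^ (-(3/2) : ℝ)) * ⟪S (x - y1), v⟫) _ y :=
    hA.mul hB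
  rw [hAB.fderiv]
  have hexp : ((-(3/2) : ℝ) - 1) = (-(5/2) : ℝ) := by norm_num
  simp only [hexp, ContinuousLinearMap.add_apply, ContinuousLinearMap.smul_apply,
    ContinuousLinearMap.neg_apply, ContinuousLinearMap.coe_comp', Function.comp_apply,
    innerSL_apply_apply, smul_eq_mul]
  have hsw : ⟪v, S w⟫ = ⟪S w, v⟫ := real_inner_comm _ _
  rw [hsw]; ring
end aux

/-- **Explicit vectorised Stein kernel for the inverse multiquadric kernel**
(Proposition 4, IMQ case): with `S = T*T` and `k(x,y) = (‖Tx - Ty‖² + 1)^{-1/2}`,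
`h_v(x,y) = k(x,y)⟪x + CDU(x), y + CDU(y)⟫ + k(x,y)³(Tr(SC²) − ⟪SC(x−y), x−y⟫ −
⟪SC(CDU(x) − CDU(y)), x−y⟫) − 3k(x,y)⁵‖CS(x−y)‖²`, where
`Tr(SC²) = ∑ᵢ λᵢ² ⟪S eᵢ, eᵢ⟫`. -/
theorem imq_kernel_stein_kernel_explicit
    {X : Type*} [NormedAddCommGroup X] [InnerProductSpace ℝ X] [CompleteSpace X]
    [MeasurableSpace X] [BorelSpace X] [SecondCountableTopology X]
    -- the covariance operator and its eigendecomposition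
    (C : X →L[ℝ] X) (hCsa : IsSelfAdjoint C)
    (e : HilbertBasis ℕ ℝ X) (l : ℕ → ℝ) (hl : ∀ i, 0 < l i)
    (hCe : ∀ i, C (e i) = l i • e i) (hltr : Summable l)
    -- the potential `U` and its gradient `DU`
    (U : X → ℝ) (DU : X → X)
    (hU : ∀ x, HasFDerivAt U ((InnerProductSpace.toDual ℝ X) (DU x) : X →L[ℝ] ℝ) x)
    -- the operator `T`, `S = T*T`, and the IMQ-`T` kernel
    (T : X →L[ℝ] X) (S : X →L[ℝ] X)
    (hS : S = (ContinuousLinearMap.adjoint T).comp T)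
    (k : X → X → ℝ)
    (hk : ∀ x y : X, k x y = (‖T x - T y‖ ^ 2 + 1) ^ (-(1 / 2) : ℝ)) :
    ∀ x y : X,
      steinKernelHv k C DU (fun i => e i) l x y
        = k x y * ⟪x + C (DU x), y + C (DU y)⟫
          + k x y ^ 3 *
              ((∑' i, l i ^ 2 * ⟪S (e i), e i⟫)
                - ⟪S (C (x - y)), x - y⟫
                - ⟪S (C (C (DU x) - C (DU y))), x - y⟫)
          - 3 * k x y ^ 5 * ‖C (S (x - y))‖ ^ 2 := by
  intro x y
  have hpos : (0:ℝ) < ‖T x - T y‖ ^ 2 + 1 := by positivity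
  set g : ℝ := ‖T x - T y‖ ^ 2 + 1 with hgdef
  set s : X := S (x - y) with hsdef
  set u : X := C (S (x - y)) with hudef
  -- powers of k
  have hk3 : k x y ^ 3 = g ^ (-(3/2) : ℝ) := by
    rw [hk, ← Real.rpow_natCast ((‖T x - T y‖ ^ 2 + 1) ^ (-(1/2):ℝ)) 3,
      ← Real.rpow_mul hpos.le]
    norm_num
  have hk5 : k x y ^ 5 = g ^ (-(5/2) : ℝ) := by
    rw [hk, ← Real.rpow_natCast ((‖T x - T y‖ ^ 2 + 1) ^ (-(1/2):ℝ)) 5,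
      ← Real.rpow_mul hpos.le]
    norm_num
  -- first partial derivative applied to a vector
  have hterm2 : ∀ w : X, fderiv ℝ (fun x1 => k x1 y) x w
      = -(g ^ (-(3/2):ℝ)) * ⟪s, w⟫ := by
    intro w
    have e2 : (fun x1 : X => k x1 y) = fun x1 => (‖T x1 - T y‖ ^ 2 + 1) ^ (-(1/2):ℝ) := by
      funext x1; rw [hk]
    rw [e2, (imq_fst_pow T S hS x y (-(1/2))).fderiv]
    simp only [ContinuousLinearMap.smul_apply, innerSL_apply_apply, smul_eq_mul]
    have hexp : ((-(1/2):ℝ) - 1) = -(3/2) := by norm_num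
    rw [hexp, ← hgdef, ← hsdef]; ring
  -- second partial derivative applied to a vector
  have hterm3 : ∀ w : X, fderiv ℝ (fun y1 => k x y1) y w
      = g ^ (-(3/2):ℝ) * ⟪s, w⟫ := by
    intro w
    have e3 : (fun y1 : X => k x y1) = fun y1 => (‖T x - T y1‖ ^ 2 + 1) ^ (-(1/2):ℝ) := by
      funext y1; rw [hk]
    rw [e3, (imq_snd_pow T S hS x y (-(1/2))).fderiv]
    simp only [ContinuousLinearMap.smul_apply, innerSL_apply_apply, smul_eq_mul]
    have hexp : ((-(1/2):ℝ) - 1) = -(3/2) := by norm_num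
    rw [hexp, ← hgdef, ← hsdef]; ring
  -- mixed second derivative applied to basis vectors
  have hmix : ∀ v : X, fderiv ℝ (fun y1 => fderiv ℝ (fun x1 => k x1 y1) x v) y v
      = -(3 * g ^ (-(5/2):ℝ) * ⟪s, v⟫ * ⟪s, v⟫) + g ^ (-(3/2):ℝ) * ⟪S v, v⟫ := by
    intro v
    have hfun : (fun y1 : X => fderiv ℝ (fun x1 => k x1 y1) x v)
        = fun y1 => -((‖T x - T y1‖ ^ 2 + 1) ^ (-(3/2):ℝ)) * ⟪S (x - y1), v⟫ := by
      funext y1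
      have e1 : (fun x1 : X => k x1 y1) = fun x1 => (‖T x1 - T y1‖ ^ 2 + 1) ^ (-(1/2):ℝ) := by
        funext x1; rw [hk]
      rw [e1, (imq_fst_pow T S hS x y1 (-(1/2))).fderiv]
      simp only [ContinuousLinearMap.smul_apply, innerSL_apply_apply, smul_eq_mul]
      have hexp : ((-(1/2):ℝ) - 1) = -(3/2) := by norm_num
      rw [hexp]; ring
    rw [hfun, imq_mixed T S hS x y v v, ← hgdef, ← hsdef]
  -- selfadjointness facts
  have hSsa : ∀ a b : X, ⟪S a, b⟫ = ⟪a, S b⟫ := by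
    intro a b
    rw [hS]
    simp only [ContinuousLinearMap.comp_apply]
    rw [ContinuousLinearMap.adjoint_inner_left, ContinuousLinearMap.adjoint_inner_right]
  have hCad : ContinuousLinearMap.adjoint C = C := ContinuousLinearMap.isSelfAdjoint_iff'.mp hCsa
  have hCinner : ∀ z : X, ∀ i, l i * ⟪z, e i⟫ = ⟪C z, e i⟫ := by
    intro z i
    conv_rhs => rw [← hCad]
    rw [ContinuousLinearMap.adjoint_inner_left, hCe i, real_inner_smul_right]
  -- summability
  have hl2 : Summable (fun i => l i ^ 2) := by
    apply Summable.of_norm_bounded_eventually_nat hltr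
    have h0 : ∀ᶠ i in Filter.atTop, l i < 1 := hltr.tendsto_atTop_zero.eventually_lt_const one_pos
    filter_upwards [h0] with i hi
    rw [Real.norm_eq_abs, _root_.abs_of_nonneg (by positivity)]
    nlinarith [hl i]
  have hsa : Summable (fun i => l i ^ 2 * ⟪S (e i), e i⟫) := by
    apply Summable.of_norm_bounded (hl2.mul_right ‖S‖)
    intro i
    rw [norm_mul, Real.norm_eq_abs (l i ^ 2), _root_.abs_of_nonneg (by positivity)]
    have h1 : ‖⟪S (e i), e i⟫‖ ≤ ‖S (e i)‖ * ‖e i‖ := norm_inner_le_norm _ _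
    have h2 : ‖S (e i)‖ ≤ ‖S‖ * ‖e i‖ := S.le_opNorm _
    have h3 : ‖e i‖ = 1 := e.orthonormal.1 i
    rw [h3] at h1 h2
    have : ‖⟪S (e i), e i⟫‖ ≤ ‖S‖ := by nlinarith
    have h4 : (0:ℝ) ≤ l i ^ 2 := by positivity
    nlinarith
  have hsb : Summable (fun i => ⟪u, e i⟫ * ⟪e i, u⟫) := e.summable_inner_mul_inner u u
  have hsumb : ∑' i, ⟪u, e i⟫ * ⟪e i, u⟫ = ‖u‖ ^ 2 := by
    rw [e.tsum_inner_mul_inner u u, real_inner_self_eq_norm_sq]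
  -- the tsum
  have htse : (fun i : ℕ => l i ^ 2 *
        fderiv ℝ (fun y1 => fderiv ℝ (fun x1 => k x1 y1) x ((fun j => e j) i)) y ((fun j => e j) i))
      = fun i => g ^ (-(3/2):ℝ) * (l i ^ 2 * ⟪S (e i), e i⟫)
          - 3 * g ^ (-(5/2):ℝ) * (⟪u, e i⟫ * ⟪e i, u⟫) := by
    funext i
    show l i ^ 2 * fderiv ℝ (fun y1 => fderiv ℝ (fun x1 => k x1 y1) x (e i)) y (e i) = _
    rw [hmix (e i)]
    have h1 : ⟪u, e i⟫ = l i * ⟪s, e i⟫ := (hCinner s i).symm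
    have h2 : ⟪e i, u⟫ = ⟪u, e i⟫ := real_inner_comm _ _
    rw [h2, h1]; ring
  have htsum : (∑' i, l i ^ 2 *
        fderiv ℝ (fun y1 => fderiv ℝ (fun x1 => k x1 y1) x ((fun j => e j) i)) y ((fun j => e j) i))
      = g ^ (-(3/2):ℝ) * (∑' i, l i ^ 2 * ⟪S (e i), e i⟫) - 3 * g ^ (-(5/2):ℝ) * ‖u‖ ^ 2 := by
    rw [htse, (hsa.mul_left _).tsum_sub (hsb.mul_left _), tsum_mul_left, tsum_mul_left, hsumb]
  -- inner product identities
  have hS1 : ⟪S (C (x - y)), x - y⟫ = ⟪s, C x⟫ - ⟪s, C y⟫ := by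
    rw [hSsa, real_inner_comm, ← hsdef, map_sub, inner_sub_right]
  have hS2 : ⟪S (C (C (DU x) - C (DU y))), x - y⟫ = ⟪s, C (C (DU x))⟫ - ⟪s, C (C (DU y))⟫ := by
    rw [hSsa, real_inner_comm, ← hsdef, map_sub, inner_sub_right]
  -- assemble
  rw [steinKernelHv, htsum, hterm2, hterm3, hk3, hk5, hS1, hS2,
    inner_add_right, inner_add_right]
  ring
end
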